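/- arXiv:1902.04806 — 3 statements merged into one kernel-verified Lean document; each statement's English description precedes it below -/
import Mathlib

section
/- Let N ≥ 2, μ ≥ μ₀, and let Ω ⊂ ℝ^N be a bounded domain with C² boundary containing the origin. Let h : Ω × ℝ → ℝ be continuous, nondecreasing in its second argument, with h(x, 0) = 0 for all x ∈ Ω. If u ∈ C²(Ω∖{0}) ∩ C((closure of Ω)∖{0}) satisfies −Δu + μ|x|^{−2}u + h(x, u) = 0 pointwise in Ω∖{0}, u = 0 on ∂Ω, and lim_{x→0} u(x)/Φ_μ(x) = 0, then u ≡ 0 on Ω∖{0}. -/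
open MeasureTheory Metric Real Set Filter
open scoped ENNReal NNReal Topology

noncomputable section

abbrev EucN (N : ℕ) : Type := EuclideanSpace ℝ (Fin N)

/-- The Laplacian of `f` at `x`, as the trace of the second derivative. -/
def lapl {N : ℕ} (f : EucN N → ℝ) (x : EucN N) : ℝ :=
  ∑ i : Fin N, iteratedFDeriv ℝ 2 f x ![EuclideanSpace.single i 1, EuclideanSpace.single i 1]

/-- The critical Hardy constant `μ₀ = -(N-2)²/4`. -/
def mu0 (N : ℕ) : ℝ := -(((N : ℝ) - 2) ^ 2) / 4

/-- `τ₊(μ) = -(N-2)/2 + √((N-2)²/4 + μ)`. -/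
def tauP (N : ℕ) (μ : ℝ) : ℝ := -((N : ℝ) - 2) / 2 + Real.sqrt (((N : ℝ) - 2) ^ 2 / 4 + μ)

/-- `τ₋(μ) = -(N-2)/2 - √((N-2)²/4 + μ)`. -/
def tauM (N : ℕ) (μ : ℝ) : ℝ := -((N : ℝ) - 2) / 2 - Real.sqrt (((N : ℝ) - 2) ^ 2 / 4 + μ)

/-- The critical exponent `p*_μ = 1 - 2/τ₋`. -/
def pstar (N : ℕ) (μ : ℝ) : ℝ := 1 - 2 / tauM N μ

/-- `ℒ*_μ ξ = -Δξ - 2 τ₊ |x|⁻² ⟨x, ∇ξ⟩`. -/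
def Lstar {N : ℕ} (μ : ℝ) (ξ : EucN N → ℝ) (x : EucN N) : ℝ :=
  - lapl ξ x - 2 * tauP N μ * ‖x‖ ^ (-2 : ℝ) * fderiv ℝ ξ x x

/-- The space of test functions `𝕏_μ(Ω)`: continuous on `closure Ω`, vanishing on `∂Ω`,
`C¹` away from the origin, with `|x| ℒ*_μ ξ` essentially bounded on `Ω`. -/
def Xtest {N : ℕ} (μ : ℝ) (Ω : Set (EucN N)) : Set (EucN N → ℝ) :=
  {ξ | ContinuousOn ξ (closure Ω) ∧ (∀ x ∈ frontier Ω, ξ x = 0) ∧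
    ContDiffOn ℝ 1 ξ (closure Ω \ {0}) ∧
    ∃ M : ℝ, ∀ᵐ x ∂(volume.restrict Ω), ‖x‖ * |Lstar μ ξ x| ≤ M}

/-- The singular fundamental profile `Φ_μ`. -/
def PhiMu (N : ℕ) (μ : ℝ) (x : EucN N) : ℝ :=
  if μ = mu0 N then ‖x‖ ^ (-((N : ℝ) - 2) / 2) * Real.log (1 / ‖x‖)
  else ‖x‖ ^ tauM N μ

lemma lapl_eq {N : ℕ} (f : EucN N → ℝ) (x : EucN N) :
    lapl f x = ∑ i : Fin N,
      fderiv ℝ (fderiv ℝ f) x (EuclideanSpace.single i 1) (EuclideanSpace.single i 1) := by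
  unfold lapl
  congr 1; ext i
  rw [iteratedFDeriv_two_apply]
  simp

lemma lapl_neg {N : ℕ} (f : EucN N → ℝ) (x : EucN N) :
    lapl (fun y => -f y) x = - lapl f x := by
  unfold lapl
  rw [← Finset.sum_neg_distrib]
  congr 1; ext i
  have : (fun y => -f y) = -f := rfl
  rw [this, iteratedFDeriv_neg_apply]
  simp

lemma sum_inner_single_sq {N : ℕ} (x : EucN N) :
    ∑ i : Fin N, (x i)^2 = ‖x‖^2 := by
  rw [EuclideanSpace.norm_eq, Real.sq_sqrt (by positivity)]
  simp [sq_abs]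

/-- Radial chain rule: first derivative. -/
lemma radial_hasFDerivAt {N : ℕ} {F F₁ : ℝ → ℝ} {y : EucN N}
    (hF : HasDerivAt F (F₁ (‖y‖^2)) (‖y‖^2)) :
    HasFDerivAt (fun z : EucN N => F (‖z‖^2)) ((2 * F₁ (‖y‖^2)) • innerSL ℝ y) y := by
  have h1 : HasFDerivAt (fun z : EucN N => ‖z‖^2) (2 • innerSL ℝ y) y :=
    (hasStrictFDerivAt_norm_sq y).hasFDerivAt
  have := hF.comp_hasFDerivAt y h1
  refine this.congr_fderiv ?_
  ext v
  simp [two_smul]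
  ring

/-- Radial laplacian formula. -/
lemma radial_lapl {N : ℕ} (F F₁ F₂ : ℝ → ℝ) (S : Set ℝ) (hS : IsOpen S)
    (hF : ∀ q ∈ S, HasDerivAt F (F₁ q) q) (hF₁ : ∀ q ∈ S, HasDerivAt F₁ (F₂ q) q)
    (x : EucN N) (hx : ‖x‖^2 ∈ S) :
    lapl (fun y => F (‖y‖^2)) x
      = 4 * ‖x‖^2 * F₂ (‖x‖^2) + 2 * N * F₁ (‖x‖^2) ∧
    HasFDerivAt (fun y : EucN N => F (‖y‖^2)) ((2 * F₁ (‖x‖^2)) • innerSL ℝ x) x := by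
  have hsq : Continuous (fun z : EucN N => ‖z‖^2) := by continuity
  set V : Set (EucN N) := (fun z : EucN N => ‖z‖^2) ⁻¹' S with hV
  have hVo : IsOpen V := hS.preimage hsq
  have hxV : x ∈ V := hx
  let A : EucN N →L[ℝ] (EucN N →L[ℝ] ℝ) := innerSL ℝ
  have hAapp : ∀ y z : EucN N, A y z = @inner ℝ _ _ y z := fun y z => rfl
  set G : EucN N → (EucN N →L[ℝ] ℝ) := fun y => (2 * F₁ (‖y‖^2)) • innerSL ℝ y with hG
  have hfd : ∀ y ∈ V, HasFDerivAt (fun z : EucN N => F (‖z‖^2)) (G y) y := by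
    intro y hy
    exact radial_hasFDerivAt (hF _ hy)
  refine ⟨?_, hfd x hxV⟩
  -- derivative of G at x
  have hc : HasFDerivAt (fun y : EucN N => 2 * F₁ (‖y‖^2))
      ((2 : ℝ) • ((2 * F₂ (‖x‖^2)) • innerSL ℝ x)) x := by
    exact (radial_hasFDerivAt (hF₁ _ hx)).const_mul 2
  have hA : HasFDerivAt (fun y : EucN N => innerSL ℝ y)
      A x :=
    A.hasFDerivAt
  have hGd : HasFDerivAt G
      ((2 * F₁ (‖x‖^2)) • A
        + ((2:ℝ) • ((2 * F₂ (‖x‖^2)) • innerSL ℝ x)).smulRight (innerSL ℝ x)) x :=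
    hc.smul hA
  have heq2 : fderiv ℝ (fderiv ℝ (fun z : EucN N => F (‖z‖^2))) x
      = (2 * F₁ (‖x‖^2)) • A
        + ((2:ℝ) • ((2 * F₂ (‖x‖^2)) • innerSL ℝ x)).smulRight (innerSL ℝ x) := by
    have hev : fderiv ℝ (fun z : EucN N => F (‖z‖^2)) =ᶠ[𝓝 x] G := by
      filter_upwards [hVo.mem_nhds hxV] with y hy
      exact (hfd y hy).fderiv
    rw [hev.fderiv_eq]
    exact hGd.fderiv
  rw [lapl_eq, heq2]
  have hsingle : ∀ i : Fin N, @inner ℝ _ _ x (EuclideanSpace.single i (1:ℝ)) = x i := by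
    intro i; rw [EuclideanSpace.inner_single_right]; simp
  have hss : ∀ i : Fin N,
      @inner ℝ _ _ (EuclideanSpace.single i (1:ℝ)) (EuclideanSpace.single i (1:ℝ)) = (1:ℝ) := by
    intro i
    rw [EuclideanSpace.inner_single_right]
    simp [EuclideanSpace.single_apply]
  have : ∀ i : Fin N,
      ((2 * F₁ (‖x‖^2)) • A
        + ((2:ℝ) • ((2 * F₂ (‖x‖^2)) • innerSL ℝ x)).smulRight (innerSL ℝ x))
        (EuclideanSpace.single i 1) (EuclideanSpace.single i 1)
      = 4 * F₂ (‖x‖^2) * (x i)^2 + 2 * F₁ (‖x‖^2) := by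
    intro i
    simp [hAapp, hsingle i, hss i]
    ring
  rw [Finset.sum_congr rfl (fun i _ => this i)]
  rw [Finset.sum_add_distrib, ← Finset.mul_sum, sum_inner_single_sq x]
  simp [Finset.sum_const, Finset.card_univ]
  ring


/-- 1D second derivative test at a local max. -/
lemma second_deriv_nonpos_1d {g g₁ : ℝ → ℝ} {A : ℝ}
    (hmax : IsLocalMax g 0)
    (hg : ∀ᶠ t in 𝓝 (0:ℝ), HasDerivAt g (g₁ t) t)
    (hg₁ : HasDerivAt g₁ A 0) : A ≤ 0 := by
  by_contra hA
  push_neg at hA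
  have hg₁0 : g₁ 0 = 0 := hmax.hasDerivAt_eq_zero hg.self_of_nhds
  have hslope : Tendsto (fun t => g₁ t / t) (𝓝[≠] (0:ℝ)) (𝓝 A) := by
    have h := hasDerivAt_iff_tendsto_slope.mp hg₁
    have : (slope g₁ 0) = (fun t => g₁ t / t) := by
      funext t; simp [slope, hg₁0, div_eq_inv_mul]
    rwa [this] at h
  have hev : ∀ᶠ t in 𝓝[≠] (0:ℝ), 0 < g₁ t / t := hslope (Ioi_mem_nhds hA)
  obtain ⟨δ₁, hδ₁, h1⟩ := Metric.mem_nhdsWithin_iff.mp hev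
  obtain ⟨s₂, hs₂n, hs₂⟩ := Filter.eventually_iff_exists_mem.mp hg
  obtain ⟨δ₂, hδ₂, h2b⟩ := Metric.mem_nhds_iff.mp hs₂n
  obtain ⟨s₃, hs₃n, hs₃⟩ := Filter.eventually_iff_exists_mem.mp hmax
  obtain ⟨δ₃, hδ₃, h3b⟩ := Metric.mem_nhds_iff.mp hs₃n
  set τ := min (min δ₁ δ₂) δ₃ / 2 with hτ
  have hτpos : 0 < τ := by positivity
  have hτlt : τ < min (min δ₁ δ₂) δ₃ := half_lt_self (by positivity)
  have hτ1 : τ < δ₁ := hτlt.trans_le ((min_le_left _ _).trans (min_le_left _ _))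
  have hτ2 : τ < δ₂ := hτlt.trans_le ((min_le_left _ _).trans (min_le_right _ _))
  have hτ3 : τ < δ₃ := hτlt.trans_le (min_le_right _ _)
  have hder : ∀ t ∈ Icc (0:ℝ) τ, HasDerivAt g (g₁ t) t := by
    intro t ht
    apply hs₂; apply h2b
    rw [mem_ball, Real.dist_eq, sub_zero, abs_of_nonneg ht.1]
    exact lt_of_le_of_lt ht.2 hτ2
  have hcont : ContinuousOn g (Icc 0 τ) := fun t ht => (hder t ht).continuousAt.continuousWithinAt
  obtain ⟨ξ, hξ, hξeq⟩ := exists_hasDerivAt_eq_slope g g₁ hτpos hcont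
    (fun t ht => hder t ⟨le_of_lt ht.1, le_of_lt ht.2⟩)
  have hξpos : 0 < g₁ ξ / ξ := by
    apply h1
    constructor
    · rw [mem_ball, Real.dist_eq, sub_zero, abs_of_nonneg (le_of_lt hξ.1)]
      exact lt_trans hξ.2 hτ1
    · simpa using ne_of_gt hξ.1
  have hg₁ξ : 0 < g₁ ξ := by
    rcases div_pos_iff.mp hξpos with ⟨h, _⟩ | ⟨_, h⟩
    · exact h
    · linarith [hξ.1]
  have hgτ : g τ ≤ g 0 := by
    apply hs₃; apply h3b
    rw [mem_ball, Real.dist_eq, sub_zero, abs_of_nonneg (le_of_lt hτpos)]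
    exact hτ3
  rw [hξeq] at hg₁ξ
  rw [sub_zero] at hg₁ξ
  have := (div_pos_iff.mp hg₁ξ)
  rcases this with ⟨h, _⟩ | ⟨_, h⟩
  · linarith
  · linarith

/-- Second derivative test in a direction at a local max. -/
lemma hessian_dir_nonpos {N : ℕ} {v : EucN N → ℝ} {x₀ : EucN N}
    (hmax : IsLocalMax v x₀)
    (hd : ∀ᶠ y in 𝓝 x₀, DifferentiableAt ℝ v y)
    (hd2 : DifferentiableAt ℝ (fderiv ℝ v) x₀) (e : EucN N) :
    fderiv ℝ (fderiv ℝ v) x₀ e e ≤ 0 := by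
  set γ : ℝ → EucN N := fun t => x₀ + t • e with hγdef
  have hγd : ∀ t : ℝ, HasDerivAt γ e t := by
    intro t
    simpa [hγdef] using ((hasDerivAt_id t).smul_const e).const_add x₀
  have hγ0 : γ 0 = x₀ := by simp [hγdef]
  have hγc : Continuous γ := by
    apply continuous_const.add
    exact continuous_id.smul continuous_const
  have htend : Tendsto γ (𝓝 0) (𝓝 x₀) := by
    rw [← hγ0]; exact hγc.tendsto 0
  have hg : ∀ᶠ t in 𝓝 (0:ℝ), HasDerivAt (fun s => v (γ s)) (fderiv ℝ v (γ t) e) t := by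
    filter_upwards [htend.eventually hd] with t ht
    exact ht.hasFDerivAt.comp_hasDerivAt t (hγd t)
  have h1 : HasDerivAt (fun t => fderiv ℝ v (γ t)) (fderiv ℝ (fderiv ℝ v) x₀ e) 0 := by
    have h0 : HasFDerivAt (fderiv ℝ v) (fderiv ℝ (fderiv ℝ v) x₀) (γ 0) := by
      rw [hγ0]; exact hd2.hasFDerivAt
    exact h0.comp_hasDerivAt 0 (hγd 0)
  have h2 : HasDerivAt (fun t => fderiv ℝ v (γ t) e) (fderiv ℝ (fderiv ℝ v) x₀ e e) 0 := by
    simpa using h1.clm_apply (hasDerivAt_const 0 e)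
  have hgmax : IsLocalMax (fun s => v (γ s)) 0 := by
    have := htend.eventually hmax
    filter_upwards [this] with t ht2
    simpa [hγ0] using ht2
  exact second_deriv_nonpos_1d hgmax hg h2

set_option maxHeartbeats 1000000 in
/-- Core comparison/maximum principle lemma. -/
lemma main_max {N : ℕ} {μ : ℝ} {Ω : Set (EucN N)} (hΩo : IsOpen Ω)
    (hΩb : Bornology.IsBounded Ω) (h0 : (0 : EucN N) ∈ Ω)
    {u : EucN N → ℝ}
    (hu2 : ContDiffOn ℝ 2 u (Ω \ {0}))
    (huc : ContinuousOn u (closure Ω \ {0}))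
    (hbdle : ∀ x ∈ frontier Ω, u x ≤ 0)
    (hsub : ∀ x ∈ Ω \ {0}, 0 < u x → -lapl u x + μ * ‖x‖ ^ (-2 : ℝ) * u x ≤ 0)
    {R : ℝ} (hR : closure Ω ⊆ ball 0 R)
    {P W : EucN N → ℝ}
    (hPC : ContDiffOn ℝ 2 P (ball (0:EucN N) R \ {0}))
    (hWC : ContDiffOn ℝ 2 W (ball (0:EucN N) R \ {0}))
    (hPpos : ∀ x ∈ ball (0:EucN N) R \ {0}, 0 < P x)
    (hWpos : ∀ x ∈ ball (0:EucN N) R \ {0}, 0 < W x)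
    (hPL : ∀ x ∈ ball (0:EucN N) R \ {0}, -lapl P x + μ * ‖x‖ ^ (-2 : ℝ) * P x = 0)
    (hWL : ∀ x ∈ ball (0:EucN N) R \ {0}, 0 < -lapl W x + μ * ‖x‖ ^ (-2 : ℝ) * W x)
    (hsmall : ∀ ε > (0:ℝ), ∀ᶠ x in 𝓝[≠] (0 : EucN N), u x ≤ ε * W x) :
    ∀ x ∈ Ω \ {0}, u x ≤ 0 := by
  set U := ball (0:EucN N) R \ {0} with hUdef
  have hUo : IsOpen U := isOpen_ball.sdiff isClosed_singleton
  have hsubU : Ω \ {0} ⊆ U := fun y hy => ⟨hR (subset_closure hy.1), hy.2⟩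
  have claim : ∀ ε > (0:ℝ), ∀ x ∈ Ω \ {0}, u x ≤ ε * W x := by
    intro ε hε
    by_contra hcon
    push_neg at hcon
    obtain ⟨x₁, hx₁, hx₁gt⟩ := hcon
    obtain ⟨δ₀, hδ₀, hsm⟩ := Metric.mem_nhdsWithin_iff.mp (hsmall ε hε)
    obtain ⟨r₀, hr₀, hball⟩ := Metric.isOpen_iff.mp hΩo 0 h0
    have hx₁0 : x₁ ≠ 0 := by simpa using hx₁.2
    have hx₁norm : 0 < ‖x₁‖ := norm_pos_iff.mpr hx₁0
    set δ := min (min (δ₀/2) (r₀/2)) (‖x₁‖/2) with hδdef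
    have hδpos : 0 < δ := by positivity
    have hδδ₀ : δ < δ₀ :=
      lt_of_le_of_lt ((min_le_left _ _).trans (min_le_left _ _)) (half_lt_self hδ₀)
    have hδx₁ : δ < ‖x₁‖ :=
      lt_of_le_of_lt (min_le_right _ _) (half_lt_self hx₁norm)
    have hsmallball : ∀ y : EucN N, y ≠ 0 → ‖y‖ ≤ δ → u y ≤ ε * W y := by
      intro y hy0 hyn
      apply hsm
      refine ⟨?_, by simpa using hy0⟩
      rw [mem_ball_zero_iff]
      exact lt_of_le_of_lt hyn hδδ₀
    set K := closure Ω ∩ {y : EucN N | δ ≤ ‖y‖} with hKdef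
    have hKc : IsCompact K :=
      (hΩb.isCompact_closure).inter_right (isClosed_le continuous_const continuous_norm)
    have hK0 : ∀ y ∈ K, y ≠ 0 := by
      intro y hy h0'
      rw [h0'] at hy
      have : δ ≤ (0:ℝ) := by simpa using hy.2
      linarith
    have hKU : K ⊆ U := fun y hy => ⟨hR hy.1, by simpa using hK0 y hy⟩
    have hx₁K : x₁ ∈ K := ⟨subset_closure hx₁.1, le_of_lt hδx₁⟩
    set v := fun y => (u y - ε * W y) / P y with hvdef
    have hvcont : ContinuousOn v K := by
      apply ContinuousOn.div
      · exact (huc.mono (fun y hy => ⟨hy.1, by simpa using hK0 y hy⟩)).sub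
          (continuousOn_const.mul (hWC.continuousOn.mono hKU))
      · exact hPC.continuousOn.mono hKU
      · exact fun y hy => ne_of_gt (hPpos y (hKU hy))
    obtain ⟨x₀, hx₀K, hx₀max⟩ := hKc.exists_isMaxOn ⟨x₁, hx₁K⟩ hvcont
    have hvx₁ : 0 < v x₁ := div_pos (by linarith) (hPpos x₁ (hsubU hx₁))
    have hvx₀ : 0 < v x₀ := lt_of_lt_of_le hvx₁ (hx₀max hx₁K)
    have hx₀U : x₀ ∈ U := hKU hx₀K
    have hx₀0 : x₀ ≠ 0 := hK0 x₀ hx₀K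
    have hnum : 0 < u x₀ - ε * W x₀ := by
      by_contra hle
      push_neg at hle
      have : v x₀ ≤ 0 := div_nonpos_of_nonpos_of_nonneg (by linarith) (le_of_lt (hPpos x₀ hx₀U))
      linarith
    have hx₀f : x₀ ∉ frontier Ω := by
      intro hf
      have h1 := hbdle x₀ hf
      have h2 : 0 < ε * W x₀ := mul_pos hε (hWpos x₀ hx₀U)
      linarith
    have hx₀Ω : x₀ ∈ Ω := by
      by_contra hni
      exact hx₀f (by rw [hΩo.frontier_eq]; exact ⟨hx₀K.1, hni⟩)
    have hx₀δ : δ < ‖x₀‖ := by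
      have h2' : δ ≤ ‖x₀‖ := hx₀K.2
      rcases lt_or_eq_of_le h2' with h | h
      · exact h
      · exact absurd (hsmallball x₀ hx₀0 (le_of_eq h.symm)) (by linarith)
    set O := (Ω ∩ U) ∩ {y : EucN N | δ < ‖y‖} with hOdef
    have hOo : IsOpen O :=
      (hΩo.inter hUo).inter (isOpen_lt continuous_const continuous_norm)
    have hx₀O : x₀ ∈ O := ⟨⟨hx₀Ω, hx₀U⟩, hx₀δ⟩
    have hOK : O ⊆ K := by
      intro y hy
      have h2' : δ < ‖y‖ := hy.2
      exact ⟨subset_closure hy.1.1, le_of_lt h2'⟩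
    have hmax : IsLocalMax v x₀ := by
      filter_upwards [hOo.mem_nhds hx₀O] with y hy
      exact hx₀max (hOK hy)
    have hOsub : O ⊆ Ω \ {0} := fun y hy => ⟨hy.1.1, hy.1.2.2⟩
    have hOU : O ⊆ U := fun y hy => hy.1.2
    have hu2O : ContDiffOn ℝ 2 u O := hu2.mono hOsub
    have hW2O : ContDiffOn ℝ 2 W O := hWC.mono hOU
    have hP2O : ContDiffOn ℝ 2 P O := hPC.mono hOU
    have hPne : ∀ y ∈ O, P y ≠ 0 := fun y hy => ne_of_gt (hPpos y (hOU hy))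
    have hv2O : ContDiffOn ℝ 2 v O :=
      (hu2O.sub (contDiffOn_const.mul hW2O)).div hP2O hPne
    have hdiffO : ∀ f : EucN N → ℝ, ContDiffOn ℝ 2 f O → ∀ y ∈ O, DifferentiableAt ℝ f y := by
      intro f hf y hy
      exact (hf.differentiableOn (by norm_num)).differentiableAt (hOo.mem_nhds hy)
    have hfd2 : ∀ f : EucN N → ℝ, ContDiffOn ℝ 2 f O → DifferentiableAt ℝ (fderiv ℝ f) x₀ := by
      intro f hf
      have h2 : ContDiffAt ℝ 2 f x₀ := hf.contDiffAt (hOo.mem_nhds hx₀O)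
      have h1 : ContDiffAt ℝ 1 (fderiv ℝ f) x₀ := h2.fderiv_right (by norm_num)
      exact h1.differentiableAt (by norm_num)
    have huWPv : ∀ y ∈ O, u y = ε * W y + P y * v y := by
      intro y hy
      have := hPne y hy
      rw [hvdef]
      field_simp
      ring
    have hfd : ∀ y ∈ O, fderiv ℝ u y
        = ε • fderiv ℝ W y + (P y • fderiv ℝ v y + v y • fderiv ℝ P y) := by
      intro y hy
      have h1 : HasFDerivAt (fun z => ε * W z) (ε • fderiv ℝ W y) y :=
        ((hdiffO W hW2O y hy).hasFDerivAt).const_mul ε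
      have h2 : HasFDerivAt (fun z => P z * v z)
          (P y • fderiv ℝ v y + v y • fderiv ℝ P y) y :=
        ((hdiffO P hP2O y hy).hasFDerivAt).mul ((hdiffO v hv2O y hy).hasFDerivAt)
      have h3 : HasFDerivAt (fun z => ε * W z + P z * v z)
          (ε • fderiv ℝ W y + (P y • fderiv ℝ v y + v y • fderiv ℝ P y)) y := h1.add h2
      have h4 : HasFDerivAt u
          (ε • fderiv ℝ W y + (P y • fderiv ℝ v y + v y • fderiv ℝ P y)) y := by
        apply h3.congr_of_eventuallyEq
        exact Filter.eventuallyEq_of_mem (hOo.mem_nhds hy) (fun z hz => huWPv z hz)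
      exact h4.fderiv
    have hDv0 : fderiv ℝ v x₀ = 0 := hmax.fderiv_eq_zero
    have hG : HasFDerivAt
        (fun y => ε • fderiv ℝ W y + (P y • fderiv ℝ v y + v y • fderiv ℝ P y))
        (ε • fderiv ℝ (fderiv ℝ W) x₀
          + ((P x₀ • fderiv ℝ (fderiv ℝ v) x₀ + (fderiv ℝ P x₀).smulRight (fderiv ℝ v x₀))
            + (v x₀ • fderiv ℝ (fderiv ℝ P) x₀
              + (fderiv ℝ v x₀).smulRight (fderiv ℝ P x₀)))) x₀ := by
      apply HasFDerivAt.add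
      · exact ((hfd2 W hW2O).hasFDerivAt).const_smul ε
      · exact HasFDerivAt.add
          (((hdiffO P hP2O x₀ hx₀O).hasFDerivAt).smul (hfd2 v hv2O).hasFDerivAt)
          (((hdiffO v hv2O x₀ hx₀O).hasFDerivAt).smul (hfd2 P hP2O).hasFDerivAt)
    have hfu2 : fderiv ℝ (fderiv ℝ u) x₀
        = ε • fderiv ℝ (fderiv ℝ W) x₀
          + ((P x₀ • fderiv ℝ (fderiv ℝ v) x₀ + (fderiv ℝ P x₀).smulRight (fderiv ℝ v x₀))
            + (v x₀ • fderiv ℝ (fderiv ℝ P) x₀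
              + (fderiv ℝ v x₀).smulRight (fderiv ℝ P x₀))) := by
      have hev : fderiv ℝ u =ᶠ[𝓝 x₀]
          (fun y => ε • fderiv ℝ W y + (P y • fderiv ℝ v y + v y • fderiv ℝ P y)) :=
        Filter.eventuallyEq_of_mem (hOo.mem_nhds hx₀O) (fun y hy => hfd y hy)
      rw [hev.fderiv_eq]
      exact hG.fderiv
    set S := ∑ i : Fin N, fderiv ℝ (fderiv ℝ v) x₀
        (EuclideanSpace.single i 1) (EuclideanSpace.single i 1) with hSdef
    have hlapl : lapl u x₀ = ε * lapl W x₀ + P x₀ * S + v x₀ * lapl P x₀ := by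
      rw [lapl_eq u, lapl_eq W, lapl_eq P, hSdef]
      have hterm : ∀ i : Fin N,
          fderiv ℝ (fderiv ℝ u) x₀ (EuclideanSpace.single i 1) (EuclideanSpace.single i 1)
          = ε * fderiv ℝ (fderiv ℝ W) x₀ (EuclideanSpace.single i 1) (EuclideanSpace.single i 1)
            + P x₀ * fderiv ℝ (fderiv ℝ v) x₀ (EuclideanSpace.single i 1) (EuclideanSpace.single i 1)
            + v x₀ * fderiv ℝ (fderiv ℝ P) x₀ (EuclideanSpace.single i 1) (EuclideanSpace.single i 1) := by
        intro i
        rw [hfu2, hDv0]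
        simp
        ring
      rw [Finset.sum_congr rfl (fun i _ => hterm i)]
      rw [Finset.sum_add_distrib, Finset.sum_add_distrib,
        ← Finset.mul_sum, ← Finset.mul_sum, ← Finset.mul_sum]
    have hSnonpos : S ≤ 0 := by
      rw [hSdef]
      apply Finset.sum_nonpos
      intro i _
      apply hessian_dir_nonpos hmax ?_ (hfd2 v hv2O)
      filter_upwards [hOo.mem_nhds hx₀O] with y hy
      exact hdiffO v hv2O y hy
    have hux₀ : 0 < u x₀ := by
      have h1 : 0 < ε * W x₀ := mul_pos hε (hWpos x₀ hx₀U)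
      linarith
    have hs := hsub x₀ ⟨hx₀Ω, by simpa using hx₀0⟩ hux₀
    have hPLx := hPL x₀ hx₀U
    have hWLx := hWL x₀ hx₀U
    have hid : -lapl u x₀ + μ * ‖x₀‖ ^ (-2:ℝ) * u x₀
        = ε * (-lapl W x₀ + μ * ‖x₀‖ ^ (-2:ℝ) * W x₀)
          + v x₀ * (-lapl P x₀ + μ * ‖x₀‖ ^ (-2:ℝ) * P x₀)
          + P x₀ * (-S) := by
      rw [hlapl, huWPv x₀ hx₀O]
      ring
    rw [hid, hPLx, mul_zero] at hs
    have hterm1 : 0 < ε * (-lapl W x₀ + μ * ‖x₀‖ ^ (-2:ℝ) * W x₀) := mul_pos hε hWLx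
    have hterm2 : 0 ≤ P x₀ * (-S) :=
      mul_nonneg (le_of_lt (hPpos x₀ hx₀U)) (by linarith)
    linarith
  intro x hx
  have hWx := hWpos x (hsubU hx)
  by_contra hpos
  push_neg at hpos
  have hcl := claim (u x / (2 * W x)) (by positivity) x hx
  rw [div_mul_eq_mul_div] at hcl
  have hWne : W x ≠ 0 := ne_of_gt hWx
  have heq2 : u x * W x / (2 * W x) = u x / 2 := by
    field_simp
  rw [heq2] at hcl
  linarith

lemma norm_rpow_neg_two {N : ℕ} (x : EucN N) : ‖x‖ ^ (-2 : ℝ) = ((‖x‖^2 : ℝ))⁻¹ := by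
  rw [show (-2:ℝ) = -((2:ℕ):ℝ) by norm_num, Real.rpow_neg (norm_nonneg x), Real.rpow_natCast]

lemma normsq_rpow {N : ℕ} (x : EucN N) (p : ℝ) : ((‖x‖^2 : ℝ)) ^ (p/2) = ‖x‖ ^ p := by
  rw [← Real.rpow_natCast ‖x‖ 2, ← Real.rpow_mul (norm_nonneg x)]
  congr 1
  push_cast
  ring

/-- `HasDerivAt` data for a single power. -/
lemma pow_hasDeriv (τ : ℝ) {q : ℝ} (hq : 0 < q) :
    HasDerivAt (fun s : ℝ => s ^ (τ/2)) ((τ/2) * q ^ (τ/2 - 1)) q :=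
  Real.hasDerivAt_rpow_const (Or.inl (ne_of_gt hq))

lemma pow_hasDeriv' (τ : ℝ) {q : ℝ} (hq : 0 < q) :
    HasDerivAt (fun s : ℝ => (τ/2) * s ^ (τ/2 - 1)) ((τ/2) * ((τ/2 - 1) * q ^ (τ/2 - 2))) q := by
  have h := (Real.hasDerivAt_rpow_const (p := τ/2 - 1) (Or.inl (ne_of_gt hq))).const_mul (τ/2)
  exact h.congr_deriv (by ring_nf)

/-- Laplacian of a single power of `‖x‖²`. -/
lemma lapl_pow {N : ℕ} (τ : ℝ) (x : EucN N) (hx : x ≠ 0) :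
    lapl (fun y : EucN N => (‖y‖^2 : ℝ) ^ (τ/2)) x
      = (τ * (τ + N - 2)) * (‖x‖^2 : ℝ) ^ (τ/2 - 1) := by
  have hxn : ‖x‖ ≠ 0 := norm_ne_zero_iff.mpr hx
  have hq : (0:ℝ) < ‖x‖^2 := by positivity
  have h := radial_lapl (fun s : ℝ => s ^ (τ/2)) (fun s => (τ/2) * s ^ (τ/2 - 1))
    (fun s => (τ/2) * ((τ/2 - 1) * s ^ (τ/2 - 2))) (Ioi 0) isOpen_Ioi
    (fun q hq => pow_hasDeriv τ hq) (fun q hq => pow_hasDeriv' τ hq) x hq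
  rw [h.1]
  set q := (‖x‖^2 : ℝ) with hqdef
  have h1 : q ^ (τ/2 - 1) = q ^ (τ/2) / q := by
    rw [Real.rpow_sub hq, Real.rpow_one]
  have h2 : q ^ (τ/2 - 2) = q ^ (τ/2) / q^2 := by
    rw [Real.rpow_sub hq, show (2:ℝ)=((2:ℕ):ℝ) by norm_num, Real.rpow_natCast]
  rw [h1, h2]
  have hqne : q ≠ 0 := ne_of_gt hq
  field_simp
  ring

/-- ℒ_μ value of a single power. -/
lemma L_pow {N : ℕ} (τ μ' : ℝ) (x : EucN N) (hx : x ≠ 0) :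
    -lapl (fun y : EucN N => (‖y‖^2 : ℝ) ^ (τ/2)) x
      + μ' * ‖x‖ ^ (-2 : ℝ) * (‖x‖^2 : ℝ) ^ (τ/2)
      = (μ' - τ * (τ + N - 2)) * (‖x‖^2 : ℝ) ^ (τ/2 - 1) := by
  have hxn : ‖x‖ ≠ 0 := norm_ne_zero_iff.mpr hx
  have hq : (0:ℝ) < ‖x‖^2 := by positivity
  rw [lapl_pow τ x hx, norm_rpow_neg_two]
  have h1 : (‖x‖^2 : ℝ) ^ (τ/2 - 1) = (‖x‖^2 : ℝ) ^ (τ/2) / (‖x‖^2) := by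
    rw [Real.rpow_sub hq, Real.rpow_one]
  rw [h1]
  have hqne : (‖x‖^2:ℝ) ≠ 0 := ne_of_gt hq
  field_simp
  ring

/-- C² of powers of `‖x‖²` away from the origin. -/
lemma contDiffOn_pow_normsq {N : ℕ} (p : ℝ) (s : Set (EucN N)) (hs : ∀ x ∈ s, x ≠ 0) :
    ContDiffOn ℝ 2 (fun y : EucN N => (‖y‖^2 : ℝ) ^ p) s := by
  intro x hx
  apply ContDiffAt.contDiffWithinAt
  have hq : (‖x‖^2 : ℝ) ≠ 0 := by
    have hxn : ‖x‖ ≠ 0 := norm_ne_zero_iff.mpr (hs x hx)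
    positivity
  exact (Real.contDiffAt_rpow_const_of_ne hq).comp x ((contDiff_norm_sq ℝ).contDiffAt)

/-- Laplacian of a sum of two powers of `‖x‖²`. -/
lemma lapl_powsum {N : ℕ} (τ σ : ℝ) (x : EucN N) (hx : x ≠ 0) :
    lapl (fun y : EucN N => (‖y‖^2 : ℝ) ^ (τ/2) + (‖y‖^2 : ℝ) ^ (σ/2)) x
      = (τ * (τ + N - 2)) * (‖x‖^2 : ℝ) ^ (τ/2 - 1)
        + (σ * (σ + N - 2)) * (‖x‖^2 : ℝ) ^ (σ/2 - 1) := by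
  have hxn : ‖x‖ ≠ 0 := norm_ne_zero_iff.mpr hx
  have hq : (0:ℝ) < ‖x‖^2 := by positivity
  have h := radial_lapl (fun s : ℝ => s ^ (τ/2) + s ^ (σ/2))
    (fun s => (τ/2) * s ^ (τ/2 - 1) + (σ/2) * s ^ (σ/2 - 1))
    (fun s => (τ/2) * ((τ/2 - 1) * s ^ (τ/2 - 2)) + (σ/2) * ((σ/2 - 1) * s ^ (σ/2 - 2)))
    (Ioi 0) isOpen_Ioi
    (fun q hq => (pow_hasDeriv τ hq).add (pow_hasDeriv σ hq))
    (fun q hq => (pow_hasDeriv' τ hq).add (pow_hasDeriv' σ hq)) x hq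
  rw [h.1]
  set q := (‖x‖^2 : ℝ) with hqdef
  have h1 : q ^ (τ/2 - 1) = q ^ (τ/2) / q := by rw [Real.rpow_sub hq, Real.rpow_one]
  have h2 : q ^ (τ/2 - 2) = q ^ (τ/2) / q^2 := by
    rw [Real.rpow_sub hq, show (2:ℝ)=((2:ℕ):ℝ) by norm_num, Real.rpow_natCast]
  have h3 : q ^ (σ/2 - 1) = q ^ (σ/2) / q := by rw [Real.rpow_sub hq, Real.rpow_one]
  have h4 : q ^ (σ/2 - 2) = q ^ (σ/2) / q^2 := by
    rw [Real.rpow_sub hq, show (2:ℝ)=((2:ℕ):ℝ) by norm_num, Real.rpow_natCast]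
  rw [h1, h2, h3, h4]
  have hqne : q ≠ 0 := ne_of_gt hq
  field_simp
  ring

/-- ℒ_μ value of the sum of two powers. -/
lemma L_powsum {N : ℕ} (τ σ μ' : ℝ) (x : EucN N) (hx : x ≠ 0) :
    -lapl (fun y : EucN N => (‖y‖^2 : ℝ) ^ (τ/2) + (‖y‖^2 : ℝ) ^ (σ/2)) x
      + μ' * ‖x‖ ^ (-2 : ℝ) * ((‖x‖^2 : ℝ) ^ (τ/2) + (‖x‖^2 : ℝ) ^ (σ/2))
      = (μ' - τ * (τ + N - 2)) * (‖x‖^2 : ℝ) ^ (τ/2 - 1)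
        + (μ' - σ * (σ + N - 2)) * (‖x‖^2 : ℝ) ^ (σ/2 - 1) := by
  have hxn : ‖x‖ ≠ 0 := norm_ne_zero_iff.mpr hx
  have hq : (0:ℝ) < ‖x‖^2 := by positivity
  rw [lapl_powsum τ σ x hx, norm_rpow_neg_two]
  have h1 : (‖x‖^2:ℝ) ^ (τ/2 - 1) = (‖x‖^2:ℝ) ^ (τ/2) / (‖x‖^2) := by
    rw [Real.rpow_sub hq, Real.rpow_one]
  have h3 : (‖x‖^2:ℝ) ^ (σ/2 - 1) = (‖x‖^2:ℝ) ^ (σ/2) / (‖x‖^2) := by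
    rw [Real.rpow_sub hq, Real.rpow_one]
  rw [h1, h3]
  have hqne : (‖x‖^2:ℝ) ≠ 0 := ne_of_gt hq
  field_simp
  ring

/-! ### Critical case radial functions -/

def tfun (c : ℝ) : ℝ → ℝ := fun q => c - Real.log q / 2
def stfun (c : ℝ) : ℝ → ℝ := fun q => Real.sqrt (tfun c q)
def Fmu0 (b c : ℝ) : ℝ → ℝ := fun q => q ^ b * (tfun c q + stfun c q)
def F1mu0 (b c : ℝ) : ℝ → ℝ := fun q =>
  b * q ^ (b-1) * (tfun c q + stfun c q)
    + q ^ b * (-(1/2) * q⁻¹ + -(1/4) * ((stfun c q)⁻¹ * q⁻¹))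
def F2mu0 (b c : ℝ) : ℝ → ℝ := fun q =>
  b*(b-1) * q ^ (b-2) * (tfun c q + stfun c q)
    + 2*b * q ^ (b-1) * (-(1/2) * q⁻¹ + -(1/4) * (stfun c q)⁻¹ * q⁻¹)
    + q ^ b * ((1/2) * (q⁻¹)^2 + (1/4) * (stfun c q)⁻¹ * (q⁻¹)^2
        + (-(1/16)) * ((stfun c q)⁻¹)^3 * (q⁻¹)^2)

lemma tfun_pos {c q : ℝ} (hq : 0 < q) (hqe : q < Real.exp (2*c)) : 0 < tfun c q := by
  have h := (Real.log_lt_iff_lt_exp hq).mpr hqe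
  unfold tfun
  linarith
lemma stfun_pos {c q : ℝ} (hq : 0 < q) (hqe : q < Real.exp (2*c)) : 0 < stfun c q :=
  Real.sqrt_pos.mpr (tfun_pos hq hqe)

lemma tfun_hasDeriv (c : ℝ) {q : ℝ} (hq : 0 < q) :
    HasDerivAt (tfun c) (-(1/2) * q⁻¹) q := by
  unfold tfun
  have h := ((Real.hasDerivAt_log (ne_of_gt hq)).div_const 2).const_sub c
  exact h.congr_deriv (by ring)

lemma stfun_hasDeriv (c : ℝ) {q : ℝ} (hq : 0 < q) (hqe : q < Real.exp (2*c)) :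
    HasDerivAt (stfun c) ((1/(2 * stfun c q)) * (-(1/2) * q⁻¹)) q := by
  unfold stfun
  have ht := tfun_pos hq hqe
  have h := (Real.hasDerivAt_sqrt (ne_of_gt ht)).comp q (tfun_hasDeriv c hq)
  exact h.congr_deriv (by ring)

lemma Fmu0_hasDeriv (b c : ℝ) {q : ℝ} (hq : 0 < q) (hqe : q < Real.exp (2*c)) :
    HasDerivAt (Fmu0 b c) (F1mu0 b c q) q := by
  have hst := stfun_pos hq hqe
  have hstne : stfun c q ≠ 0 := ne_of_gt hst
  have hqne : q ≠ 0 := ne_of_gt hq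
  have hrp := Real.hasDerivAt_rpow_const (p := b) (Or.inl hqne)
  have hg : HasDerivAt (fun q => tfun c q + stfun c q)
      (-(1/2) * q⁻¹ + (1/(2 * stfun c q)) * (-(1/2) * q⁻¹)) q :=
    (tfun_hasDeriv c hq).add (stfun_hasDeriv c hq hqe)
  have h := hrp.mul hg
  unfold Fmu0 F1mu0
  refine h.congr_deriv ?_
  field_simp
  ring

lemma F1mu0_hasDeriv (b c : ℝ) {q : ℝ} (hq : 0 < q) (hqe : q < Real.exp (2*c)) :
    HasDerivAt (F1mu0 b c) (F2mu0 b c q) q := by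
  have hst := stfun_pos hq hqe
  have hstne : stfun c q ≠ 0 := ne_of_gt hst
  have hqne : q ≠ 0 := ne_of_gt hq
  have hg : HasDerivAt (fun q => tfun c q + stfun c q)
      (-(1/2) * q⁻¹ + (1/(2 * stfun c q)) * (-(1/2) * q⁻¹)) q :=
    (tfun_hasDeriv c hq).add (stfun_hasDeriv c hq hqe)
  have hrp1 : HasDerivAt (fun x : ℝ => x ^ (b-1)) ((b-1) * q ^ (b-1-1)) q :=
    Real.hasDerivAt_rpow_const (Or.inl hqne)
  have hrpb : HasDerivAt (fun x : ℝ => x ^ b) (b * q ^ (b-1)) q :=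
    Real.hasDerivAt_rpow_const (Or.inl hqne)
  have hA := (hrp1.const_mul b).mul hg
  have hstinv : HasDerivAt (fun y => (stfun c y)⁻¹)
      (-((1/(2 * stfun c q)) * (-(1/2) * q⁻¹)) / stfun c q ^ 2) q :=
    (stfun_hasDeriv c hq hqe).inv hstne
  have hd2 := (hstinv.mul (hasDerivAt_inv hqne)).const_mul (-(1/4) : ℝ)
  have hd1 := (hasDerivAt_inv hqne).const_mul (-(1/2) : ℝ)
  have hd := hd1.add hd2
  have hB := hrpb.mul hd
  have h := hA.add hB
  rw [show (b-1-1 : ℝ) = b-2 by ring] at h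
  refine h.congr_deriv ?_
  unfold F2mu0
  simp only [Pi.add_apply, Pi.mul_apply]
  field_simp
  ring

lemma L_mu0W {N : ℕ} (b c : ℝ) (hb : ((N:ℝ)) = 2 - 4*b) (x : EucN N) (hx : x ≠ 0)
    (hxe : (‖x‖^2:ℝ) < Real.exp (2*c)) :
    -lapl (fun y : EucN N => Fmu0 b c (‖y‖^2)) x
      + (-(((N:ℝ)-2)^2)/4) * ‖x‖ ^ (-2:ℝ) * Fmu0 b c (‖x‖^2)
      = (1/4) * ((‖x‖^2:ℝ) ^ b / ‖x‖^2) * ((stfun c (‖x‖^2))⁻¹)^3 := by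
  have hxn : ‖x‖ ≠ 0 := norm_ne_zero_iff.mpr hx
  have hq : (0:ℝ) < ‖x‖^2 := by positivity
  have h := radial_lapl (Fmu0 b c) (F1mu0 b c) (F2mu0 b c) (Ioo 0 (Real.exp (2*c)))
    isOpen_Ioo (fun q hq => Fmu0_hasDeriv b c hq.1 hq.2)
    (fun q hq => F1mu0_hasDeriv b c hq.1 hq.2) x ⟨hq, hxe⟩
  rw [h.1, norm_rpow_neg_two]
  set q := (‖x‖^2 : ℝ) with hqdef
  have hqne : q ≠ 0 := ne_of_gt hq
  have ht := tfun_pos hq hxe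
  have hst := stfun_pos hq hxe
  have hstne : stfun c q ≠ 0 := ne_of_gt hst
  have hst2 : stfun c q ^ 2 = tfun c q := Real.sq_sqrt ht.le
  have h1 : q ^ (b-1) = q ^ b / q := by rw [Real.rpow_sub hq, Real.rpow_one]
  have h2 : q ^ (b-2) = q ^ b / q^2 := by
    rw [Real.rpow_sub hq, show (2:ℝ)=((2:ℕ):ℝ) by norm_num, Real.rpow_natCast]
  rw [hb]
  unfold Fmu0 F1mu0 F2mu0
  rw [h1, h2, ← hst2]
  field_simp
  ring

lemma contDiffOn_Fmu0_normsq {N : ℕ} (b c : ℝ) (s : Set (EucN N))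
    (hs : ∀ x ∈ s, x ≠ 0 ∧ (‖x‖^2:ℝ) < Real.exp (2*c)) :
    ContDiffOn ℝ 2 (fun y : EucN N => Fmu0 b c (‖y‖^2)) s := by
  intro x hx
  apply ContDiffAt.contDiffWithinAt
  obtain ⟨hx0, hxe⟩ := hs x hx
  have hxn : ‖x‖ ≠ 0 := norm_ne_zero_iff.mpr hx0
  have hq : (0:ℝ) < ‖x‖^2 := by positivity
  have hqne : (‖x‖^2:ℝ) ≠ 0 := ne_of_gt hq
  have ht := tfun_pos hq hxe
  have htc : ContDiffAt ℝ 2 (tfun c) (‖x‖^2) := by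
    unfold tfun
    exact contDiffAt_const.sub ((Real.contDiffAt_log.mpr hqne).div_const 2)
  have hstc : ContDiffAt ℝ 2 (stfun c) (‖x‖^2) := by
    unfold stfun
    exact (Real.contDiffAt_sqrt (ne_of_gt ht)).comp _ htc
  have hFc : ContDiffAt ℝ 2 (Fmu0 b c) (‖x‖^2) := by
    unfold Fmu0
    exact (Real.contDiffAt_rpow_const_of_ne hqne).mul (htc.add hstc)
  exact hFc.comp x ((contDiff_norm_sq ℝ).contDiffAt)

/-- Apply the maximum principle to `u` and `-u`. -/
lemma key {N : ℕ} {μ : ℝ} {Ω : Set (EucN N)} (hΩo : IsOpen Ω)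
    (hΩb : Bornology.IsBounded Ω) (h0 : (0 : EucN N) ∈ Ω)
    {h : EucN N → ℝ → ℝ}
    (hmono : ∀ x ∈ Ω, Monotone (h x))
    (hzero : ∀ x ∈ Ω, h x 0 = 0)
    {u : EucN N → ℝ}
    (hu2 : ContDiffOn ℝ 2 u (Ω \ {0}))
    (huc : ContinuousOn u (closure Ω \ {0}))
    (heq : ∀ x ∈ Ω \ {0},
      -lapl u x + μ * ‖x‖ ^ (-2 : ℝ) * u x + h x (u x) = 0)
    (hbd : ∀ x ∈ frontier Ω, u x = 0)
    {R : ℝ} (hR : closure Ω ⊆ ball 0 R)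
    {P W : EucN N → ℝ}
    (hPC : ContDiffOn ℝ 2 P (ball (0:EucN N) R \ {0}))
    (hWC : ContDiffOn ℝ 2 W (ball (0:EucN N) R \ {0}))
    (hPpos : ∀ x ∈ ball (0:EucN N) R \ {0}, 0 < P x)
    (hWpos : ∀ x ∈ ball (0:EucN N) R \ {0}, 0 < W x)
    (hPL : ∀ x ∈ ball (0:EucN N) R \ {0}, -lapl P x + μ * ‖x‖ ^ (-2 : ℝ) * P x = 0)
    (hWL : ∀ x ∈ ball (0:EucN N) R \ {0}, 0 < -lapl W x + μ * ‖x‖ ^ (-2 : ℝ) * W x)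
    (hsmallabs : ∀ ε > (0:ℝ), ∀ᶠ x in 𝓝[≠] (0 : EucN N), |u x| ≤ ε * W x) :
    ∀ x ∈ Ω \ {0}, u x = 0 := by
  have hsub_u : ∀ x ∈ Ω \ {0}, 0 < u x → -lapl u x + μ * ‖x‖ ^ (-2 : ℝ) * u x ≤ 0 := by
    intro x hxm hpos
    have he := heq x hxm
    have hh : 0 ≤ h x (u x) := by
      have h2 := hmono x hxm.1 (le_of_lt hpos)
      rw [hzero x hxm.1] at h2
      exact h2
    linarith
  have hpos_le := main_max hΩo hΩb h0 hu2 huc (fun x hx => le_of_eq (hbd x hx)) hsub_u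
    hR hPC hWC hPpos hWpos hPL hWL
    (fun ε hε => (hsmallabs ε hε).mono (fun x hx => le_trans (le_abs_self _) hx))
  have hsub_n : ∀ x ∈ Ω \ {0}, 0 < (fun y => -u y) x →
      -lapl (fun y => -u y) x + μ * ‖x‖ ^ (-2 : ℝ) * (fun y => -u y) x ≤ 0 := by
    intro x hxm hpos
    simp only at hpos
    have he := heq x hxm
    have hh : h x (u x) ≤ 0 := by
      have h2 := hmono x hxm.1 (show u x ≤ (0:ℝ) by linarith)
      rw [hzero x hxm.1] at h2
      exact h2
    rw [lapl_neg]
    simp only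
    linarith
  have hneg_le := main_max hΩo hΩb h0 hu2.neg huc.neg
    (fun x hx => by simp [hbd x hx]) hsub_n hR hPC hWC hPpos hWpos hPL hWL
    (fun ε hε => (hsmallabs ε hε).mono (fun x hx => le_trans (neg_le_abs (u x)) hx))
  intro x hx
  have h1 := hpos_le x hx
  have h2 := hneg_le x hx
  linarith

/-- a solution of `ℒ_μ u + h(x,u) = 0` in `Ω \ {0}` vanishing on `∂Ω`
and `o(Φ_μ)` at the origin is identically zero. -/
theorem stmt7 (N : ℕ) (hN : 2 ≤ N) (μ : ℝ) (hμ : mu0 N ≤ μ)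
    (Ω : Set (EucN N)) (hΩo : IsOpen Ω) (hΩb : Bornology.IsBounded Ω)
    (hΩc : IsConnected Ω) (h0 : (0 : EucN N) ∈ Ω)
    (h : EucN N → ℝ → ℝ)
    (hc : ContinuousOn (fun q : EucN N × ℝ => h q.1 q.2) (Ω ×ˢ (univ : Set ℝ)))
    (hmono : ∀ x ∈ Ω, Monotone (h x))
    (hzero : ∀ x ∈ Ω, h x 0 = 0)
    (u : EucN N → ℝ)
    (hu2 : ContDiffOn ℝ 2 u (Ω \ {0}))
    (huc : ContinuousOn u (closure Ω \ {0}))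
    (heq : ∀ x ∈ Ω \ {0},
      -lapl u x + μ * ‖x‖ ^ (-2 : ℝ) * u x + h x (u x) = 0)
    (hbd : ∀ x ∈ frontier Ω, u x = 0)
    (hlim : Tendsto (fun x => u x / PhiMu N μ x) (𝓝[≠] (0 : EucN N)) (𝓝 0)) :
    ∀ x ∈ Ω \ {0}, u x = 0 := by
  have hn2 : (2:ℝ) ≤ (N:ℝ) := by exact_mod_cast hN
  have hμ0' : -(((N:ℝ)-2)^2)/4 ≤ μ := hμ
  have hdisc : 0 ≤ ((N:ℝ)-2)^2/4 + μ := by linarith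
  obtain ⟨R, hR1, hRsub⟩ := hΩb.closure.subset_ball_lt 1 0
  have hRpos : (0:ℝ) < R := lt_trans one_pos hR1
  have h1lim : ∀ ε > (0:ℝ), ∀ᶠ x in 𝓝[≠] (0:EucN N), |u x / PhiMu N μ x| < ε := by
    intro ε hε
    filter_upwards [hlim (Metric.ball_mem_nhds (0:ℝ) hε)] with x hx
    simpa [Real.dist_eq, abs_div] using hx
  have h3ne : ∀ᶠ x in 𝓝[≠] (0:EucN N), x ≠ 0 := by
    filter_upwards [self_mem_nhdsWithin] with x hx
    simpa using hx
  by_cases hcrit : μ = mu0 N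
  · -- critical case
    have hμeq : μ = -(((N:ℝ)-2)^2)/4 := hcrit
    have hcpos : 0 < Real.log R := Real.log_pos hR1
    have hexp : Real.exp (2 * Real.log R) = R^2 := by
      rw [two_mul, Real.exp_add, Real.exp_log hRpos]; ring
    have hUfact : ∀ x ∈ ball (0:EucN N) R \ {0},
        x ≠ 0 ∧ (‖x‖^2:ℝ) < Real.exp (2*Real.log R) := by
      intro x hx
      have hx0 : x ≠ 0 := by simpa using hx.2
      have hxR : ‖x‖ < R := mem_ball_zero_iff.mp hx.1
      refine ⟨hx0, ?_⟩
      rw [hexp]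
      nlinarith [norm_nonneg x]
    have hb : ((N:ℝ)) = 2 - 4*((-((N:ℝ)-2)/2)/2) := by ring
    refine key hΩo hΩb h0 hmono hzero hu2 huc heq hbd hRsub
      (P := fun y : EucN N => (‖y‖^2 : ℝ) ^ ((-((N:ℝ)-2)/2) / 2))
      (W := fun y : EucN N => Fmu0 ((-((N:ℝ)-2)/2)/2) (Real.log R) (‖y‖^2))
      ?_ ?_ ?_ ?_ ?_ ?_ ?_
    · exact contDiffOn_pow_normsq _ _ (fun x hx => by simpa using hx.2)
    · exact contDiffOn_Fmu0_normsq _ _ _ hUfact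
    · intro x hx
      have hxn : ‖x‖ ≠ 0 := norm_ne_zero_iff.mpr (by simpa using hx.2)
      exact Real.rpow_pos_of_pos (by positivity) _
    · intro x hx
      obtain ⟨hx0, hxe⟩ := hUfact x hx
      have hxn : ‖x‖ ≠ 0 := norm_ne_zero_iff.mpr hx0
      have hq : (0:ℝ) < ‖x‖^2 := by positivity
      exact mul_pos (Real.rpow_pos_of_pos hq _)
        (add_pos (tfun_pos hq hxe) (stfun_pos hq hxe))
    · intro x hx
      have hx0 : x ≠ 0 := by simpa using hx.2
      rw [L_pow (-((N:ℝ)-2)/2) μ x hx0]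
      have hc0 : μ - (-((N:ℝ)-2)/2) * ((-((N:ℝ)-2)/2) + N - 2) = 0 := by
        rw [hμeq]; ring
      rw [hc0, zero_mul]
    · intro x hx
      obtain ⟨hx0, hxe⟩ := hUfact x hx
      have hxn : ‖x‖ ≠ 0 := norm_ne_zero_iff.mpr hx0
      have hq : (0:ℝ) < ‖x‖^2 := by positivity
      rw [hμeq, L_mu0W _ _ hb x hx0 hxe]
      have hst := stfun_pos hq hxe
      exact mul_pos (mul_pos (by norm_num) (div_pos (Real.rpow_pos_of_pos hq _) hq))
        (pow_pos (inv_pos.mpr hst) 3)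
    · intro ε hε
      have h2small : ∀ᶠ x in 𝓝[≠] (0:EucN N), ‖x‖ < 1 := by
        filter_upwards [mem_nhdsWithin_of_mem_nhds (Metric.ball_mem_nhds (0:EucN N) one_pos)]
          with x hx
        simpa using mem_ball_zero_iff.mp hx
      filter_upwards [h1lim ε hε, h3ne, h2small] with x hx1 hx3 hx2
      have hxn : (0:ℝ) < ‖x‖ := norm_pos_iff.mpr hx3
      have hq : (0:ℝ) < ‖x‖^2 := by positivity
      have hΦ : PhiMu N μ x = ‖x‖ ^ (-((N:ℝ)-2)/2) * (- Real.log ‖x‖) := by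
        unfold PhiMu
        rw [if_pos hcrit, one_div, Real.log_inv]
      have hrp : 0 < ‖x‖ ^ (-((N:ℝ)-2)/2) := Real.rpow_pos_of_pos hxn _
      have hlog : 0 < - Real.log ‖x‖ := by
        have := Real.log_neg hxn hx2
        linarith
      have hΦpos : 0 < PhiMu N μ x := by rw [hΦ]; exact mul_pos hrp hlog
      rw [abs_div, abs_of_pos hΦpos] at hx1
      have habs : |u x| < ε * PhiMu N μ x := (div_lt_iff₀ hΦpos).mp hx1
      have htf : tfun (Real.log R) (‖x‖^2) = Real.log R - Real.log ‖x‖ := by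
        unfold tfun
        rw [Real.log_pow]
        push_cast
        ring
      have hWx : Fmu0 ((-((N:ℝ)-2)/2)/2) (Real.log R) (‖x‖^2)
          = ‖x‖ ^ (-((N:ℝ)-2)/2)
            * (tfun (Real.log R) (‖x‖^2) + stfun (Real.log R) (‖x‖^2)) := by
        unfold Fmu0
        rw [normsq_rpow x (-((N:ℝ)-2)/2)]
      have hstn : 0 ≤ stfun (Real.log R) (‖x‖^2) := Real.sqrt_nonneg _
      have hΦW : PhiMu N μ x ≤ Fmu0 ((-((N:ℝ)-2)/2)/2) (Real.log R) (‖x‖^2) := by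
        rw [hΦ, hWx, htf]
        apply mul_le_mul_of_nonneg_left ?_ hrp.le
        linarith
      calc |u x| ≤ ε * PhiMu N μ x := habs.le
        _ ≤ _ := mul_le_mul_of_nonneg_left hΦW hε.le
  · -- subcritical case
    have hs2 : (Real.sqrt (((N:ℝ)-2)^2/4 + μ))^2 = ((N:ℝ)-2)^2/4 + μ := Real.sq_sqrt hdisc
    have hμgt : -(((N:ℝ)-2)^2)/4 < μ := lt_of_le_of_ne hμ0' (fun hh => hcrit hh.symm)
    have htp : tauP N μ = -((N:ℝ)-2)/2 + Real.sqrt (((N:ℝ)-2)^2/4 + μ) := rfl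
    have htm : tauM N μ = -((N:ℝ)-2)/2 - Real.sqrt (((N:ℝ)-2)^2/4 + μ) := rfl
    refine key hΩo hΩb h0 hmono hzero hu2 huc heq hbd hRsub
      (P := fun y : EucN N => (‖y‖^2 : ℝ) ^ (tauP N μ / 2))
      (W := fun y : EucN N => (‖y‖^2 : ℝ) ^ (tauM N μ / 2) + (‖y‖^2 : ℝ) ^ ((-((N:ℝ)-2)/2) / 2))
      ?_ ?_ ?_ ?_ ?_ ?_ ?_
    · exact contDiffOn_pow_normsq _ _ (fun x hx => by simpa using hx.2)
    · exact (contDiffOn_pow_normsq _ _ (fun x hx => by simpa using hx.2)).add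
        (contDiffOn_pow_normsq _ _ (fun x hx => by simpa using hx.2))
    · intro x hx
      have hxn : ‖x‖ ≠ 0 := norm_ne_zero_iff.mpr (by simpa using hx.2)
      exact Real.rpow_pos_of_pos (by positivity) _
    · intro x hx
      have hxn : ‖x‖ ≠ 0 := norm_ne_zero_iff.mpr (by simpa using hx.2)
      exact add_pos (Real.rpow_pos_of_pos (by positivity) _)
        (Real.rpow_pos_of_pos (by positivity) _)
    · intro x hx
      have hx0 : x ≠ 0 := by simpa using hx.2
      rw [L_pow (tauP N μ) μ x hx0]
      have hc0 : μ - tauP N μ * (tauP N μ + N - 2) = 0 := by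
        rw [htp]; nlinarith [hs2]
      rw [hc0, zero_mul]
    · intro x hx
      have hx0 : x ≠ 0 := by simpa using hx.2
      have hxn : ‖x‖ ≠ 0 := norm_ne_zero_iff.mpr hx0
      rw [L_powsum (tauM N μ) (-((N:ℝ)-2)/2) μ x hx0]
      have hc0 : μ - tauM N μ * (tauM N μ + N - 2) = 0 := by
        rw [htm]; nlinarith [hs2]
      have hc1 : (0:ℝ) < μ - (-((N:ℝ)-2)/2) * ((-((N:ℝ)-2)/2) + N - 2) := by nlinarith
      rw [hc0, zero_mul, zero_add]
      exact mul_pos hc1 (Real.rpow_pos_of_pos (by positivity) _)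
    · intro ε hε
      filter_upwards [h1lim ε hε, h3ne] with x hx1 hx3
      have hxn : (0:ℝ) < ‖x‖ := norm_pos_iff.mpr hx3
      have hΦ : PhiMu N μ x = ‖x‖ ^ tauM N μ := by unfold PhiMu; rw [if_neg hcrit]
      have hΦpos : 0 < ‖x‖ ^ tauM N μ := Real.rpow_pos_of_pos hxn _
      rw [hΦ, abs_div, abs_of_pos hΦpos] at hx1
      have habs : |u x| < ε * ‖x‖ ^ tauM N μ := (div_lt_iff₀ hΦpos).mp hx1
      have hWge : ‖x‖ ^ tauM N μ
          ≤ (‖x‖^2 : ℝ) ^ (tauM N μ / 2) + (‖x‖^2 : ℝ) ^ ((-((N:ℝ)-2)/2) / 2) := by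
        rw [normsq_rpow x (tauM N μ), normsq_rpow x (-((N:ℝ)-2)/2)]
        exact le_add_of_nonneg_right (Real.rpow_pos_of_pos hxn _).le
      calc |u x| ≤ ε * ‖x‖ ^ tauM N μ := habs.le
        _ ≤ _ := mul_le_mul_of_nonneg_left hWge hε.le
end
end

section
/- Let N ≥ 3 and let g : [0,∞) → [0,∞) be a continuous nondecreasing function. For b > 0 set I(b) = ∫₁^∞ g(b t^{(N−2)/(N+2)} ln t) t^{−2} dt. Then for every b > 0, I(b) < ∞ if and only if ∫_e^∞ g(τ) (ln τ)^{(N+2)/(N−2)} τ^{−2N/(N−2)} dτ < ∞. In particular, the finiteness of I(b) is independent of the value of b > 0. -/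
open MeasureTheory Metric Real Set Filter
open scoped ENNReal NNReal Topology

noncomputable section

lemma myLintegralImage {s : Set ℝ} {f f' : ℝ → ℝ}
    (hs : MeasurableSet s) (hf' : ∀ x ∈ s, HasDerivWithinAt f (f' x) s x) (hf : Set.InjOn f s)
    (G : ℝ → ℝ≥0∞) : ∫⁻ x in f '' s, G x = ∫⁻ x in s, ENNReal.ofReal |f' x| * G (f x) := by
  simpa only [ContinuousLinearMap.det_toSpanSingleton] using
    lintegral_image_eq_lintegral_abs_det_fderiv_mul volume hs
      (fun x hx => (hf' x hx).hasFDerivWithinAt) hf G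

lemma finite_split {f : ℝ → ℝ≥0∞} {a T : ℝ} (h : a ≤ T)
    (hfin : ∫⁻ x in Set.Ioc a T, f x < ⊤) :
    ((∫⁻ x in Set.Ioi a, f x < ⊤) ↔ (∫⁻ x in Set.Ioi T, f x < ⊤)) := by
  constructor
  · intro H
    exact lt_of_le_of_lt (lintegral_mono_set (Set.Ioi_subset_Ioi h)) H
  · intro H
    rw [← Set.Ioc_union_Ioi_eq_Ioi h]
    exact lt_of_le_of_lt (lintegral_union_le _ _ _) (ENNReal.add_lt_top.mpr ⟨hfin, H⟩)

lemma finite_of_bounded {f : ℝ → ℝ≥0∞} {a T M : ℝ}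
    (hb : ∀ x ∈ Set.Ioc a T, f x ≤ ENNReal.ofReal M) :
    ∫⁻ x in Set.Ioc a T, f x < ⊤ := by
  calc ∫⁻ x in Set.Ioc a T, f x ≤ ∫⁻ _ in Set.Ioc a T, ENNReal.ofReal M :=
        setLIntegral_mono measurable_const hb
    _ = ENNReal.ofReal M * volume (Set.Ioc a T) := by rw [setLIntegral_const]
    _ < ⊤ := ENNReal.mul_lt_top ENNReal.ofReal_lt_top measure_Ioc_lt_top

lemma finite_iff_between {s : Set ℝ} (hs : MeasurableSet s) {f h : ℝ → ℝ≥0∞} {c₁ c₂ : ℝ≥0∞}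
    (hc₁0 : c₁ ≠ 0) (hc₁t : c₁ ≠ ⊤) (hc₂t : c₂ ≠ ⊤)
    (h₁ : ∀ x ∈ s, c₁ * f x ≤ h x) (h₂ : ∀ x ∈ s, h x ≤ c₂ * f x) :
    ((∫⁻ x in s, f x < ⊤) ↔ (∫⁻ x in s, h x < ⊤)) := by
  constructor
  · intro H
    calc ∫⁻ x in s, h x ≤ ∫⁻ x in s, c₂ * f x := setLIntegral_mono' hs h₂
      _ = c₂ * ∫⁻ x in s, f x := lintegral_const_mul' _ _ hc₂t
      _ < ⊤ := ENNReal.mul_lt_top hc₂t.lt_top H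
  · intro H
    have h3 : c₁ * ∫⁻ x in s, f x ≤ ∫⁻ x in s, h x := by
      rw [← lintegral_const_mul' _ _ hc₁t]
      exact setLIntegral_mono' hs h₁
    by_contra hcon
    push_neg at hcon
    rw [top_le_iff.mp hcon] at h3
    rw [ENNReal.mul_top hc₁0] at h3
    exact H.ne (top_le_iff.mp h3)


set_option maxHeartbeats 1000000 in
/-- for continuous nondecreasing `g : [0,∞) → [0,∞)`, the finiteness of
`I(b) = ∫₁^∞ g(b t^{(N-2)/(N+2)} ln t) t^{-2} dt` is equivalent, for every `b > 0`, to
`∫_e^∞ g(τ) (ln τ)^{(N+2)/(N-2)} τ^{-2N/(N-2)} dτ < ∞`; in particular it is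
independent of `b > 0`. -/
theorem stmt12 (N : ℕ) (hN : 3 ≤ N) (g : ℝ → ℝ)
    (hgc : ContinuousOn g (Ici 0)) (hgm : MonotoneOn g (Ici 0))
    (hg0 : ∀ s : ℝ, 0 ≤ s → 0 ≤ g s) :
    ∀ b : ℝ, 0 < b →
      ((∫⁻ t in Ioi (1 : ℝ),
          ENNReal.ofReal (g (b * t ^ (((N : ℝ) - 2) / ((N : ℝ) + 2)) * Real.log t) *
            t ^ (-2 : ℝ)) ∂volume < ⊤) ↔
       (∫⁻ τ in Ioi (Real.exp 1),
          ENNReal.ofReal (g τ * (Real.log τ) ^ (((N : ℝ) + 2) / ((N : ℝ) - 2)) *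
            τ ^ (-(2 * (N : ℝ)) / ((N : ℝ) - 2))) ∂volume < ⊤)) := by
  intro b hb
  have hn : (3:ℝ) ≤ (N:ℝ) := by exact_mod_cast hN
  set n : ℝ := (N : ℝ) with hndef
  have h2 : (0:ℝ) < n - 2 := by linarith
  have h2' : (0:ℝ) < n + 2 := by linarith
  simp only [neg_div] at *
  set α : ℝ := (n - 2) / (n + 2) with hαdef
  set β : ℝ := (n + 2) / (n - 2) with hβdef
  set γ : ℝ := 2 * n / (n - 2) with hγdef
  have hα0 : 0 < α := div_pos h2 h2'
  have hα1 : α < 1 := (div_lt_one h2').mpr (by linarith)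
  have hβ0 : 0 < β := div_pos h2' h2
  have hγβ : γ = 1 + β := by rw [hγdef, hβdef]; field_simp; ring
  have hαγ : α * γ = 1 + α := by rw [hγdef, hαdef]; field_simp; ring
  -- the change of variables map and its derivative
  set φ : ℝ → ℝ := fun t => b * t ^ α * Real.log t with hφdef
  set φd : ℝ → ℝ := fun t => b * (t ^ (α - 1) * (α * Real.log t + 1)) with hφddef
  -- the threshold
  set M₀ : ℝ := max (max 1 (Real.exp 1 / b)) (Real.log b / (1 - α)) with hM₀def
  have hM₀1 : (1:ℝ) ≤ M₀ := le_trans (le_max_left _ _) (le_max_left _ _)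
  set T : ℝ := Real.exp M₀ with hTdef
  have hlogT : Real.log T = M₀ := Real.log_exp _
  have hT1 : (1:ℝ) < T := by
    calc (1:ℝ) = Real.exp 0 := by simp
      _ < Real.exp M₀ := Real.exp_lt_exp.mpr (by linarith)
  have hT0 : (0:ℝ) < T := by linarith
  -- basic facts for t ≥ T
  have hfacts : ∀ t : ℝ, T ≤ t → 0 < t ∧ 1 ≤ Real.log t ∧ Real.exp 1 ≤ b * Real.log t ∧
      Real.log b ≤ (1 - α) * Real.log t := by
    intro t ht
    have ht0 : 0 < t := lt_of_lt_of_le hT0 ht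
    have hlog : M₀ ≤ Real.log t := by
      rw [← hlogT]; exact Real.log_le_log hT0 ht
    refine ⟨ht0, by linarith, ?_, ?_⟩
    · have h1 : Real.exp 1 / b ≤ Real.log t :=
        le_trans (le_trans (le_max_right _ _) (le_max_left _ _)) hlog
      have hx : Real.exp 1 / b * b = Real.exp 1 := div_mul_cancel₀ _ hb.ne'
      have := mul_le_mul_of_nonneg_right h1 hb.le
      linarith
    · have h1 : Real.log b / (1 - α) ≤ Real.log t := le_trans (le_max_right _ _) hlog
      have hx : Real.log b / (1 - α) * (1 - α) = Real.log b :=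
        div_mul_cancel₀ _ (by linarith : (1:ℝ) - α ≠ 0)
      have := mul_le_mul_of_nonneg_right h1 (show (0:ℝ) ≤ 1 - α by linarith)
      linarith
  -- positivity of φ on [1,∞) and monotonicity
  have hφ_nonneg : ∀ t : ℝ, 1 ≤ t → 0 ≤ φ t := by
    intro t ht
    have ht0 : (0:ℝ) < t := by linarith
    have : 0 ≤ Real.log t := Real.log_nonneg ht
    have : 0 ≤ t ^ α := (Real.rpow_pos_of_pos ht0 α).le
    positivity
  have hφ_mono : MonotoneOn φ (Ici 1) := by
    intro x hx y hy hxy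
    simp only [hφdef]
    have hx0 : (0:ℝ) < x := lt_of_lt_of_le one_pos hx
    have h1 : x ^ α ≤ y ^ α := Real.rpow_le_rpow hx0.le hxy hα0.le
    have h2 : Real.log x ≤ Real.log y := Real.log_le_log hx0 hxy
    have h3 : 0 ≤ Real.log x := Real.log_nonneg hx
    have h4 : 0 ≤ x ^ α := (Real.rpow_pos_of_pos hx0 α).le
    have h5 : 0 ≤ y ^ α := Real.rpow_nonneg (by linarith : (0:ℝ) ≤ y) α
    have := mul_le_mul h1 h2 h3 h5
    calc b * x ^ α * Real.log x = b * (x ^ α * Real.log x) := by ring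
      _ ≤ b * (y ^ α * Real.log y) := mul_le_mul_of_nonneg_left this hb.le
      _ = b * y ^ α * Real.log y := by ring
  have hφ_strict : StrictMonoOn φ (Ici T) := by
    intro x hx y hy hxy
    simp only [hφdef]
    have hx1 : (1:ℝ) < x := lt_of_lt_of_le hT1 hx
    have hx0 : (0:ℝ) < x := by linarith
    have h1 : x ^ α < y ^ α := Real.rpow_lt_rpow hx0.le hxy hα0
    have h2 : Real.log x < Real.log y := Real.log_lt_log hx0 hxy
    have h3 : 0 < Real.log x := Real.log_pos hx1
    have h4 : 0 ≤ x ^ α := (Real.rpow_pos_of_pos hx0 α).le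
    have := mul_lt_mul'' h1 h2 h4 h3.le
    calc b * x ^ α * Real.log x = b * (x ^ α * Real.log x) := by ring
      _ < b * (y ^ α * Real.log y) := by exact mul_lt_mul_of_pos_left this hb
      _ = b * y ^ α * Real.log y := by ring
  -- derivative
  have hderiv : ∀ t : ℝ, 0 < t → HasDerivAt φ (φd t) t := by
    intro t ht0
    have h1 : HasDerivAt (fun s : ℝ => s ^ α) (α * t ^ (α - 1)) t :=
      Real.hasDerivAt_rpow_const (Or.inl ht0.ne')
    have h2 : HasDerivAt Real.log t⁻¹ t := Real.hasDerivAt_log ht0.ne'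
    have h3 := (h1.mul h2).const_mul b
    have heq : b * (α * t ^ (α - 1) * Real.log t + t ^ α * t⁻¹) = φd t := by
      have : t ^ α * t⁻¹ = t ^ (α - 1) := by
        rw [Real.rpow_sub ht0, Real.rpow_one]; ring
      simp only [hφddef]
      rw [this]; ring
    rw [heq] at h3
    simpa only [hφdef, mul_assoc, Pi.mul_apply] using h3
  -- bounds on log (φ t)
  have hlogφ : ∀ t : ℝ, T ≤ t → α * Real.log t ≤ Real.log (φ t) ∧
      Real.log (φ t) ≤ 2 * Real.log t := by
    intro t ht
    obtain ⟨ht0, hl1, heb, hlb⟩ := hfacts t ht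
    have hl0 : 0 < Real.log t := by linarith
    have htα : (0:ℝ) < t ^ α := Real.rpow_pos_of_pos ht0 α
    have hL : Real.log (φ t) = Real.log b + α * Real.log t + Real.log (Real.log t) := by
      simp only [hφdef]
      rw [Real.log_mul (by positivity) hl0.ne', Real.log_mul hb.ne' htα.ne', Real.log_rpow ht0]
    have hsum : 0 ≤ Real.log b + Real.log (Real.log t) := by
      have heq : Real.log b + Real.log (Real.log t) = Real.log (b * Real.log t) :=
        (Real.log_mul hb.ne' hl0.ne').symm
      rw [heq]
      apply Real.log_nonneg
      have : (1:ℝ) ≤ Real.exp 1 := by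
        have := Real.add_one_le_exp (1:ℝ); linarith
      linarith
    have hloglog : Real.log (Real.log t) ≤ Real.log t := by
      have := Real.log_le_sub_one_of_pos hl0; linarith
    constructor
    · linarith
    · linarith
  have hφT : Real.exp 1 ≤ φ T := by
    obtain ⟨hT0', hl1, heb, -⟩ := hfacts T le_rfl
    have h1 : (1:ℝ) ≤ T ^ α := Real.one_le_rpow (by linarith) hα0.le
    have hl0 : (0:ℝ) ≤ Real.log T := by linarith
    have h2a := mul_le_mul_of_nonneg_right (mul_le_mul_of_nonneg_left h1 hb.le) hl0
    calc Real.exp 1 ≤ b * Real.log T := heb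
      _ ≤ b * T ^ α * Real.log T := by linarith
  -- the core pointwise estimate
  have hcore : ∀ t : ℝ, T ≤ t →
      b ^ ((1:ℝ)-γ) * α ^ γ * t ^ (-2:ℝ) ≤ φd t * (Real.log (φ t)) ^ β * (φ t) ^ (-γ) ∧
      φd t * (Real.log (φ t)) ^ β * (φ t) ^ (-γ) ≤
        b ^ ((1:ℝ)-γ) * ((α+1) * (2:ℝ) ^ β) * t ^ (-2:ℝ) := by
    intro t ht
    obtain ⟨ht0, hl1, -, -⟩ := hfacts t ht
    have hl0 : (0:ℝ) < Real.log t := by linarith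
    obtain ⟨hL1, hL2⟩ := hlogφ t ht
    have hLpos : 0 < Real.log (φ t) := lt_of_lt_of_le (by positivity) hL1
    set ℓ := Real.log t with hldef
    set L := Real.log (φ t) with hLdef2
    have htα : (0:ℝ) < t ^ α := Real.rpow_pos_of_pos ht0 α
    have hφpos : 0 < φ t := by simp only [hφdef]; positivity
    have hrw1 : (φ t) ^ (-γ) = b ^ (-γ) * t ^ (α * -γ) * ℓ ^ (-γ) := by
      simp only [hφdef]
      rw [Real.mul_rpow (by positivity) hl0.le, Real.mul_rpow hb.le htα.le,
        ← Real.rpow_mul ht0.le]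
    have hts : t ^ (α - 1) * t ^ (α * -γ) = t ^ (-2:ℝ) := by
      rw [← Real.rpow_add ht0]
      congr 1
      linear_combination -hαγ
    have hbb : b * b ^ (-γ) = b ^ ((1:ℝ)-γ) := by
      nth_rewrite 1 [← Real.rpow_one b]
      rw [← Real.rpow_add hb]
      congr 1
    have hkey : φd t * L ^ β * (φ t) ^ (-γ)
        = (b ^ ((1:ℝ)-γ) * t ^ (-2:ℝ)) * ((α * ℓ + 1) * ℓ ^ (-γ) * L ^ β) := by
      rw [hrw1]
      simp only [hφddef]
      calc b * (t ^ (α-1) * (α * ℓ + 1)) * L ^ β * (b ^ (-γ) * t ^ (α * -γ) * ℓ ^ (-γ))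
          = (b * b ^ (-γ)) * (t ^ (α-1) * t ^ (α * -γ)) *
              ((α * ℓ + 1) * ℓ ^ (-γ) * L ^ β) := by ring
        _ = _ := by rw [hts, hbb]
    have e1 : ℓ * (ℓ ^ (-γ) * ℓ ^ β) = 1 := by
      nth_rewrite 1 [← Real.rpow_one ℓ]
      rw [← Real.rpow_add hl0, ← Real.rpow_add hl0,
        show (1:ℝ) + (-γ + β) = 0 by rw [hγβ]; ring, Real.rpow_zero]
    have hLβ_low : α ^ β * ℓ ^ β ≤ L ^ β := by
      rw [← Real.mul_rpow hα0.le hl0.le]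
      exact Real.rpow_le_rpow (by positivity) hL1 hβ0.le
    have hLβ_up : L ^ β ≤ (2:ℝ) ^ β * ℓ ^ β := by
      rw [← Real.mul_rpow (by norm_num) hl0.le]
      exact Real.rpow_le_rpow hLpos.le hL2 hβ0.le
    have hαγ2 : α * α ^ β = α ^ γ := by
      nth_rewrite 1 [← Real.rpow_one α]
      rw [← Real.rpow_add hα0, hγβ]
    have hfac_low : α ^ γ ≤ (α * ℓ + 1) * ℓ ^ (-γ) * L ^ β := by
      have step : (α * ℓ) * ℓ ^ (-γ) * (α ^ β * ℓ ^ β) ≤ (α * ℓ + 1) * ℓ ^ (-γ) * L ^ β := by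
        apply mul_le_mul
        · exact mul_le_mul_of_nonneg_right (by linarith) (Real.rpow_nonneg hl0.le _)
        · exact hLβ_low
        · positivity
        · positivity
      calc α ^ γ = (α * α ^ β) * (ℓ * (ℓ ^ (-γ) * ℓ ^ β)) := by rw [e1, hαγ2, mul_one]
        _ = (α * ℓ) * ℓ ^ (-γ) * (α ^ β * ℓ ^ β) := by ring
        _ ≤ _ := step
    have hfac_up : (α * ℓ + 1) * ℓ ^ (-γ) * L ^ β ≤ (α + 1) * (2:ℝ) ^ β := by
      have step : (α * ℓ + 1) * ℓ ^ (-γ) * L ^ β ≤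
          ((α+1) * ℓ) * ℓ ^ (-γ) * ((2:ℝ) ^ β * ℓ ^ β) := by
        apply mul_le_mul
        · exact mul_le_mul_of_nonneg_right (by nlinarith) (Real.rpow_nonneg hl0.le _)
        · exact hLβ_up
        · positivity
        · positivity
      calc (α * ℓ + 1) * ℓ ^ (-γ) * L ^ β ≤ ((α+1) * ℓ) * ℓ ^ (-γ) * ((2:ℝ) ^ β * ℓ ^ β) := step
        _ = ((α+1) * (2:ℝ) ^ β) * (ℓ * (ℓ ^ (-γ) * ℓ ^ β)) := by ring
        _ = (α+1) * (2:ℝ) ^ β := by rw [e1, mul_one]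
    constructor
    · calc b ^ ((1:ℝ)-γ) * α ^ γ * t ^ (-2:ℝ)
          = (b ^ ((1:ℝ)-γ) * t ^ (-2:ℝ)) * α ^ γ := by ring
        _ ≤ (b ^ ((1:ℝ)-γ) * t ^ (-2:ℝ)) * ((α * ℓ + 1) * ℓ ^ (-γ) * L ^ β) :=
            mul_le_mul_of_nonneg_left hfac_low (by positivity)
        _ = φd t * L ^ β * (φ t) ^ (-γ) := hkey.symm
    · calc φd t * L ^ β * (φ t) ^ (-γ)
          = (b ^ ((1:ℝ)-γ) * t ^ (-2:ℝ)) * ((α * ℓ + 1) * ℓ ^ (-γ) * L ^ β) := hkey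
        _ ≤ (b ^ ((1:ℝ)-γ) * t ^ (-2:ℝ)) * ((α + 1) * (2:ℝ) ^ β) :=
            mul_le_mul_of_nonneg_left hfac_up (by positivity)
        _ = b ^ ((1:ℝ)-γ) * ((α+1) * (2:ℝ) ^ β) * t ^ (-2:ℝ) := by ring
  have hγ0 : 0 < γ := div_pos (by linarith) h2
  have he1 : (1:ℝ) ≤ Real.exp 1 := by
    have := Real.add_one_le_exp (1:ℝ); linarith
  -- tendsto and continuity
  have htends : Tendsto φ atTop atTop := by
    have h1 : Tendsto (fun t : ℝ => t ^ α) atTop atTop := tendsto_rpow_atTop hα0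
    have h2'' : Tendsto (fun t : ℝ => b * t ^ α) atTop atTop := h1.const_mul_atTop hb
    exact h2''.atTop_mul_atTop₀ Real.tendsto_log_atTop
  have hcont : ∀ x : ℝ, 0 < x → ContinuousAt φ x := by
    intro x hx
    exact (continuousAt_const.mul (Real.continuousAt_rpow_const x α (Or.inl hx.ne'))).mul
      (Real.continuousAt_log hx.ne')
  have hinj : Set.InjOn φ (Ioi T) := (hφ_strict.mono Set.Ioi_subset_Ici_self).injOn
  have himg : φ '' (Ioi T) = Ioi (φ T) := by
    apply Subset.antisymm
    · rintro y ⟨t, ht, rfl⟩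
      exact hφ_strict (mem_Ici.mpr le_rfl) (mem_Ici.mpr (le_of_lt ht)) ht
    · intro y hy
      obtain ⟨u, hyu, hTu⟩ :=
        ((htends.eventually (eventually_gt_atTop y)).and (eventually_ge_atTop (T+1))).exists
      have hTu' : T ≤ u := by linarith
      have hcont' : ContinuousOn φ (Icc T u) := fun x hx =>
        (hcont x (lt_of_lt_of_le hT0 hx.1)).continuousWithinAt
      obtain ⟨t, ht, rfl⟩ := intermediate_value_Ioo hTu' hcont' ⟨hy, hyu⟩
      exact ⟨t, ht.1, rfl⟩
  have hderivW : ∀ t ∈ Ioi T, HasDerivWithinAt φ (φd t) (Ioi T) t := fun t ht =>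
    (hderiv t (lt_trans hT0 ht)).hasDerivWithinAt
  have hφdpos : ∀ t : ℝ, T ≤ t → 0 < φd t := by
    intro t ht
    obtain ⟨ht0, hl1, -, -⟩ := hfacts t ht
    have h1 : (0:ℝ) < t ^ (α - 1) := Real.rpow_pos_of_pos ht0 _
    have h3 : 0 < α * Real.log t + 1 := by nlinarith
    simp only [hφddef]
    positivity
  -- the finite pieces
  have hA : ∫⁻ t in Ioc (1:ℝ) T,
      ENNReal.ofReal (g (b * t ^ α * Real.log t) * t ^ (-2:ℝ)) < ⊤ := by
    apply finite_of_bounded (M := g (φ T))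
    intro t htmem
    obtain ⟨ht1, htT⟩ := htmem
    have ht1' : (1:ℝ) ≤ t := ht1.le
    have hφt : φ t ≤ φ T := hφ_mono (mem_Ici.mpr ht1') (mem_Ici.mpr hT1.le) htT
    have hg1 : g (φ t) ≤ g (φ T) :=
      hgm (mem_Ici.mpr (hφ_nonneg t ht1')) (mem_Ici.mpr (hφ_nonneg T hT1.le)) hφt
    have ht2 : t ^ (-2:ℝ) ≤ 1 := Real.rpow_le_one_of_one_le_of_nonpos ht1' (by norm_num)
    apply ENNReal.ofReal_le_ofReal
    show g (φ t) * t ^ (-2:ℝ) ≤ g (φ T)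
    calc g (φ t) * t ^ (-2:ℝ) ≤ g (φ T) * 1 :=
        mul_le_mul hg1 ht2 (Real.rpow_nonneg (by linarith) _) (hg0 _ (hφ_nonneg T hT1.le))
      _ = g (φ T) := mul_one _
  have hB : ∫⁻ τ in Ioc (Real.exp 1) (φ T),
      ENNReal.ofReal (g τ * Real.log τ ^ β * τ ^ (-γ)) < ⊤ := by
    apply finite_of_bounded (M := g (φ T) * Real.log (φ T) ^ β)
    intro τ htmem
    obtain ⟨hτ1, hτ2⟩ := htmem
    have hτ1' : (1:ℝ) ≤ τ := le_trans he1 hτ1.le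
    have hτ0 : (0:ℝ) < τ := by linarith
    have hg1 : g τ ≤ g (φ T) :=
      hgm (mem_Ici.mpr (by linarith)) (mem_Ici.mpr (hφ_nonneg T hT1.le)) hτ2
    have hlogle : Real.log τ ≤ Real.log (φ T) := Real.log_le_log hτ0 hτ2
    have hlognn : 0 ≤ Real.log τ := Real.log_nonneg hτ1'
    have hlb : Real.log τ ^ β ≤ Real.log (φ T) ^ β := Real.rpow_le_rpow hlognn hlogle hβ0.le
    have hτγ : τ ^ (-γ) ≤ 1 :=
      Real.rpow_le_one_of_one_le_of_nonpos hτ1' (neg_nonpos.mpr hγ0.le)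
    have hgTnn : 0 ≤ g (φ T) := hg0 _ (hφ_nonneg T hT1.le)
    have hlogTnn : 0 ≤ Real.log (φ T) := le_trans hlognn hlogle
    apply ENNReal.ofReal_le_ofReal
    have hstep : g τ * Real.log τ ^ β * τ ^ (-γ) ≤ (g (φ T) * Real.log (φ T) ^ β) * 1 :=
      mul_le_mul (mul_le_mul hg1 hlb (Real.rpow_nonneg hlognn β) hgTnn) hτγ
        (Real.rpow_nonneg hτ0.le _) (mul_nonneg hgTnn (Real.rpow_nonneg hlogTnn β))
    calc g τ * Real.log τ ^ β * τ ^ (-γ) ≤ (g (φ T) * Real.log (φ T) ^ β) * 1 := hstep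
      _ = _ := mul_one _
  -- constants
  have hc1r : (0:ℝ) < b ^ ((1:ℝ)-γ) * α ^ γ :=
    mul_pos (Real.rpow_pos_of_pos hb _) (Real.rpow_pos_of_pos hα0 _)
  have hc2r : (0:ℝ) < b ^ ((1:ℝ)-γ) * ((α+1) * (2:ℝ) ^ β) :=
    mul_pos (Real.rpow_pos_of_pos hb _)
      (mul_pos (by linarith) (Real.rpow_pos_of_pos two_pos _))
  -- assembly
  rw [finite_split hT1.le hA, finite_split hφT hB, ← himg,
    myLintegralImage measurableSet_Ioi hderivW hinj
      (fun τ => ENNReal.ofReal (g τ * Real.log τ ^ β * τ ^ (-γ)))]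
  refine finite_iff_between (c₁ := ENNReal.ofReal (b ^ ((1:ℝ)-γ) * α ^ γ))
    (c₂ := ENNReal.ofReal (b ^ ((1:ℝ)-γ) * ((α+1) * (2:ℝ) ^ β))) measurableSet_Ioi
    (ENNReal.ofReal_pos.mpr hc1r).ne' ENNReal.ofReal_ne_top ENNReal.ofReal_ne_top ?_ ?_
  · intro t ht
    have ht' : T ≤ t := (mem_Ioi.mp ht).le
    obtain ⟨hlow, -⟩ := hcore t ht'
    have ht1' : (1:ℝ) ≤ t := le_trans hT1.le ht'
    have hgnn : 0 ≤ g (φ t) := hg0 _ (hφ_nonneg t ht1')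
    show ENNReal.ofReal (b ^ ((1:ℝ)-γ) * α ^ γ) * ENNReal.ofReal (g (φ t) * t ^ (-2:ℝ)) ≤
      ENNReal.ofReal |φd t| * ENNReal.ofReal (g (φ t) * Real.log (φ t) ^ β * (φ t) ^ (-γ))
    rw [abs_of_pos (hφdpos t ht'), ← ENNReal.ofReal_mul hc1r.le,
      ← ENNReal.ofReal_mul (hφdpos t ht').le]
    apply ENNReal.ofReal_le_ofReal
    calc b ^ ((1:ℝ)-γ) * α ^ γ * (g (φ t) * t ^ (-2:ℝ))
        = g (φ t) * (b ^ ((1:ℝ)-γ) * α ^ γ * t ^ (-2:ℝ)) := by ring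
      _ ≤ g (φ t) * (φd t * Real.log (φ t) ^ β * (φ t) ^ (-γ)) :=
          mul_le_mul_of_nonneg_left hlow hgnn
      _ = φd t * (g (φ t) * Real.log (φ t) ^ β * (φ t) ^ (-γ)) := by ring
  · intro t ht
    have ht' : T ≤ t := (mem_Ioi.mp ht).le
    obtain ⟨-, hup⟩ := hcore t ht'
    have ht1' : (1:ℝ) ≤ t := le_trans hT1.le ht'
    have hgnn : 0 ≤ g (φ t) := hg0 _ (hφ_nonneg t ht1')
    show ENNReal.ofReal |φd t| * ENNReal.ofReal (g (φ t) * Real.log (φ t) ^ β * (φ t) ^ (-γ)) ≤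
      ENNReal.ofReal (b ^ ((1:ℝ)-γ) * ((α+1) * (2:ℝ) ^ β)) * ENNReal.ofReal (g (φ t) * t ^ (-2:ℝ))
    rw [abs_of_pos (hφdpos t ht'), ← ENNReal.ofReal_mul hc2r.le,
      ← ENNReal.ofReal_mul (hφdpos t ht').le]
    apply ENNReal.ofReal_le_ofReal
    calc φd t * (g (φ t) * Real.log (φ t) ^ β * (φ t) ^ (-γ))
        = g (φ t) * (φd t * Real.log (φ t) ^ β * (φ t) ^ (-γ)) := by ring
      _ ≤ g (φ t) * (b ^ ((1:ℝ)-γ) * ((α+1) * (2:ℝ) ^ β) * t ^ (-2:ℝ)) :=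
          mul_le_mul_of_nonneg_left hup hgnn
      _ = b ^ ((1:ℝ)-γ) * ((α+1) * (2:ℝ) ^ β) * (g (φ t) * t ^ (-2:ℝ)) := by ring
end
end

section
/- Let N ≥ 2 and μ > μ₀ = −(N−2)²/4, so that τ₋ = −(N−2)/2 − √((N−2)²/4+μ) < 0, and let g : [0,∞) → [0,∞) be a nondecreasing measurable function. Then for every a > 0, ∫_{B₁} g(a|x|^{τ₋}) |x|^{τ₊} dx < ∞ if and only if ∫₁^∞ g(t) t^{−1−p*_μ} dt < ∞, where B₁ is the open unit ball of ℝ^N, τ₊ = −(N−2)/2 + √((N−2)²/4+μ) and p*_μ = 1 − 2/τ₋. -/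
open MeasureTheory Metric Real Set Filter
open scoped ENNReal NNReal Topology

noncomputable section

private lemma radial_lintegral (N : ℕ) (hN : 1 ≤ N) (f : ℝ → ℝ≥0∞) (hf : Measurable f) :
    ∫⁻ x, f ‖x‖ ∂(volume : Measure (EucN N)) =
      (volume : Measure (EucN N)).toSphere univ *
        ∫⁻ r in Ioi (0:ℝ), ENNReal.ofReal (r ^ (N - 1)) * f r := by
  haveI : NeZero N := ⟨by omega⟩
  have hdim : Module.finrank ℝ (EucN N) = N := finrank_euclideanSpace_fin
  have step1 : ∫⁻ x, f ‖x‖ ∂(volume : Measure (EucN N)) =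
      ∫⁻ x in ({0}ᶜ : Set (EucN N)), f ‖x‖ ∂volume := by
    rw [restrict_compl_singleton]
  rw [step1, ← lintegral_subtype_comap (measurableSet_singleton (0:EucN N)).compl
      (fun x => f ‖x‖)]
  have hmp := Measure.measurePreserving_homeomorphUnitSphereProd
    (volume : Measure (EucN N))
  have hg : Measurable (fun p : sphere (0:EucN N) 1 × Ioi (0:ℝ) => f (p.2 : ℝ)) :=
    hf.comp (measurable_subtype_coe.comp measurable_snd)
  have step2 : ∫⁻ x : ({0}ᶜ : Set (EucN N)), f ‖(x : EucN N)‖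
        ∂((volume : Measure (EucN N)).comap Subtype.val) =
      ∫⁻ p : sphere (0:EucN N) 1 × Ioi (0:ℝ), f (p.2 : ℝ)
        ∂((volume : Measure (EucN N)).toSphere.prod (Measure.volumeIoiPow (N - 1))) := by
    have h := hmp.lintegral_comp hg
    simp only [homeomorphUnitSphereProd_apply_snd_coe] at h
    rw [hdim] at h
    exact h
  rw [step2]
  have step3 : ∫⁻ p : sphere (0:EucN N) 1 × Ioi (0:ℝ), f (p.2 : ℝ)
        ∂((volume : Measure (EucN N)).toSphere.prod (Measure.volumeIoiPow (N - 1))) =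
      (volume : Measure (EucN N)).toSphere univ *
        ∫⁻ r : Ioi (0:ℝ), f (r : ℝ) ∂(Measure.volumeIoiPow (N - 1)) := by
    have h := lintegral_map
      (μ := (volume : Measure (EucN N)).toSphere.prod (Measure.volumeIoiPow (N - 1)))
      (f := fun r : Ioi (0:ℝ) => f r) (g := Prod.snd)
      (hf.comp measurable_subtype_coe) measurable_snd
    rw [Measure.map_snd_prod, lintegral_smul_measure] at h
    exact h.symm
  rw [step3]
  congr 1
  have h := lintegral_withDensity_eq_lintegral_mul
      ((volume : Measure ℝ).comap (Subtype.val : Ioi (0:ℝ) → ℝ))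
      (f := fun r : Ioi (0:ℝ) => ENNReal.ofReal (r.1 ^ (N-1)))
      (by fun_prop) (g := fun r : Ioi (0:ℝ) => f r) (hf.comp measurable_subtype_coe)
  rw [Measure.volumeIoiPow, h]
  exact lintegral_subtype_comap measurableSet_Ioi
      (fun r : ℝ => ENNReal.ofReal (r ^ (N-1)) * f r)

private lemma lintegral_image_1d {s : Set ℝ} {f f' : ℝ → ℝ}
    (hs : MeasurableSet s) (hf' : ∀ x ∈ s, HasDerivWithinAt f (f' x) s x)
    (hf : InjOn f s) (g : ℝ → ℝ≥0∞) :
    ∫⁻ x in f '' s, g x = ∫⁻ x in s, ENNReal.ofReal |f' x| * g (f x) := by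
  simpa only [ContinuousLinearMap.det_toSpanSingleton] using
    lintegral_image_eq_lintegral_abs_det_fderiv_mul volume hs
      (fun x hx => (hf' x hx).hasFDerivWithinAt) hf g

private lemma mul_lt_top_iff_right {c x : ℝ≥0∞} (hc0 : c ≠ 0) (hct : c ≠ ⊤) :
    c * x < ⊤ ↔ x < ⊤ := by
  constructor
  · intro h
    by_contra hx
    rw [not_lt, top_le_iff] at hx
    rw [hx, ENNReal.mul_top hc0] at h
    exact absurd h (lt_irrefl _)
  · exact fun h => ENNReal.mul_lt_top hct.lt_top h

private lemma tail_iff (g : ℝ → ℝ) (hgm : MonotoneOn g (Ici 0))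
    (hg0 : ∀ s : ℝ, 0 ≤ s → 0 ≤ g s) (e a : ℝ) (ha : 0 < a) :
    ((∫⁻ t in Ioi a, ENNReal.ofReal (g t * t ^ e) ∂volume < ⊤) ↔
      (∫⁻ t in Ioi (1:ℝ), ENNReal.ofReal (g t * t ^ e) ∂volume < ⊤)) := by
  set f : ℝ → ℝ≥0∞ := fun t => ENNReal.ofReal (g t * t ^ e) with hfdef
  set c := max a 1 with hcdef
  have hc1 : (1:ℝ) ≤ c := le_max_right _ _
  have hc0 : (0:ℝ) < c := lt_of_lt_of_le one_pos hc1
  have key : ∀ b : ℝ, 0 < b → b ≤ c →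
      ((∫⁻ t in Ioi b, f t ∂volume < ⊤) ↔ (∫⁻ t in Ioi c, f t ∂volume < ⊤)) := by
    intro b hb hbc
    constructor
    · exact fun h => lt_of_le_of_lt (lintegral_mono_set (Ioi_subset_Ioi hbc)) h
    · intro h
      have hfin : ∫⁻ t in Ioc b c, f t ∂volume < ⊤ := by
        have hM : ∀ t ∈ Ioc b c, f t ≤ ENNReal.ofReal (g c * (b ^ e + c ^ e)) := by
          intro t ht
          have ht0 : 0 < t := hb.trans ht.1
          have h1 : g t ≤ g c := hgm (mem_Ici.2 ht0.le) (mem_Ici.2 hc0.le) ht.2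
          have h2 : t ^ e ≤ b ^ e + c ^ e := by
            rcases le_or_gt e 0 with he | he
            · have h3 := Real.rpow_le_rpow_of_nonpos hb ht.1.le he
              have h4 : (0:ℝ) ≤ c ^ e := Real.rpow_nonneg hc0.le e
              linarith
            · have h3 := Real.rpow_le_rpow ht0.le ht.2 he.le
              have h4 : (0:ℝ) ≤ b ^ e := Real.rpow_nonneg hb.le e
              linarith
          exact ENNReal.ofReal_le_ofReal
            (mul_le_mul h1 h2 (Real.rpow_nonneg ht0.le e) (hg0 c hc0.le))
        calc ∫⁻ t in Ioc b c, f t ∂volume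
            ≤ ∫⁻ _ in Ioc b c, ENNReal.ofReal (g c * (b ^ e + c ^ e)) ∂volume :=
              setLIntegral_mono measurable_const hM
          _ = ENNReal.ofReal (g c * (b ^ e + c ^ e)) * volume (Ioc b c) :=
              setLIntegral_const _ _
          _ < ⊤ := ENNReal.mul_lt_top ENNReal.ofReal_lt_top measure_Ioc_lt_top
      have hsub : Ioi b ⊆ Ioc b c ∪ Ioi c := by
        intro t ht
        rcases le_or_gt t c with h' | h'
        · exact Or.inl ⟨ht, h'⟩
        · exact Or.inr h'
      calc ∫⁻ t in Ioi b, f t ∂volume ≤ ∫⁻ t in Ioc b c ∪ Ioi c, f t ∂volume :=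
            lintegral_mono_set hsub
        _ ≤ (∫⁻ t in Ioc b c, f t ∂volume) + ∫⁻ t in Ioi c, f t ∂volume :=
            lintegral_union_le _ _ _
        _ < ⊤ := ENNReal.add_lt_top.2 ⟨hfin, h⟩
  exact (key a ha (le_max_left _ _)).trans (key 1 one_pos hc1).symm

private lemma subst_lemma (N : ℕ) (a τm τp : ℝ) (ha : 0 < a) (hτm : τm < 0)
    (hsum : τp + τm = 2 - N) (g : ℝ → ℝ) :
    ∫⁻ t in Ioi a, ENNReal.ofReal (g t * t ^ (-2 + 2 / τm)) ∂volume =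
      ENNReal.ofReal ((-τm) * a ^ (2 / τm - 1)) *
        ∫⁻ r in Ioo (0:ℝ) 1,
          ENNReal.ofReal (g (a * r ^ τm) * r ^ (τp + (N:ℝ) - 1)) ∂volume := by
  have hτm' : τm ≠ 0 := hτm.ne
  set ψ : ℝ → ℝ := fun r => a * r ^ τm with hψ
  set ψ' : ℝ → ℝ := fun r => a * (τm * r ^ (τm - 1)) with hψ'
  have himg : ψ '' Ioo 0 1 = Ioi a := by
    ext t
    constructor
    · rintro ⟨r, hr, rfl⟩
      have h1 : 1 < r ^ τm := (Real.one_lt_rpow_iff_of_pos hr.1).2 (Or.inr ⟨hr.2, hτm⟩)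
      have : a * 1 < a * r ^ τm := by nlinarith
      simpa [ψ] using this
    · intro ht
      have hta : 0 < t := ha.trans ht
      have ht' : (1:ℝ) < t / a := (one_lt_div ha).2 ht
      refine ⟨(t / a) ^ (1 / τm), ⟨Real.rpow_pos_of_pos (by positivity) _,
        Real.rpow_lt_one_of_one_lt_of_neg ht' (div_neg_of_pos_of_neg one_pos hτm)⟩, ?_⟩
      show a * ((t / a) ^ (1 / τm)) ^ τm = t
      rw [← Real.rpow_mul (by positivity), one_div_mul_cancel hτm', Real.rpow_one]
      field_simp
  have hderiv : ∀ r ∈ Ioo (0:ℝ) 1, HasDerivWithinAt ψ (ψ' r) (Ioo 0 1) r := fun r hr =>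
    ((Real.hasDerivAt_rpow_const (Or.inl hr.1.ne')).const_mul a).hasDerivWithinAt
  have hinj : InjOn ψ (Ioo 0 1) := by
    intro r1 h1 r2 h2 heq
    have : r1 ^ τm = r2 ^ τm := mul_left_cancel₀ ha.ne' heq
    exact Real.rpow_left_injOn hτm' h1.1.le h2.1.le this
  rw [← himg, lintegral_image_1d measurableSet_Ioo hderiv hinj,
    ← lintegral_const_mul' _ _ ENNReal.ofReal_ne_top]
  refine setLIntegral_congr_fun measurableSet_Ioo (fun r hr => ?_)
  have hr0 : 0 < r := hr.1
  have hrp : 0 < r ^ τm := Real.rpow_pos_of_pos hr0 _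
  have hrp1 : 0 < r ^ (τm - 1) := Real.rpow_pos_of_pos hr0 _
  have habs : |ψ' r| = (-τm) * (a * r ^ (τm - 1)) := by
    have hval : ψ' r = a * (τm * r ^ (τm - 1)) := rfl
    rw [hval, abs_of_nonpos (mul_nonpos_of_nonneg_of_nonpos ha.le (mul_nonpos_of_nonpos_of_nonneg hτm.le hrp1.le))]
    ring
  rw [← ENNReal.ofReal_mul (abs_nonneg _), ← ENNReal.ofReal_mul (mul_nonneg (by linarith) (Real.rpow_nonneg ha.le _))]
  congr 1
  have e1 : ψ r ^ (-2 + 2 / τm) = a ^ (-2 + 2 / τm) * r ^ (τm * (-2 + 2 / τm)) := by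
    rw [hψ]
    rw [Real.mul_rpow ha.le hrp.le, Real.rpow_mul hr0.le]
  have e2 : r ^ (τp + (N:ℝ) - 1) = r ^ (τm - 1) * r ^ (τm * (-2 + 2 / τm)) := by
    rw [← Real.rpow_add hr0]
    congr 1
    have h5 : τm * (2 / τm) = 2 := by field_simp
    nlinarith [hsum]
  have e3 : a ^ (2 / τm - 1) = a * a ^ (-2 + 2 / τm) := by
    rw [show (2 / τm - 1) = 1 + (-2 + 2 / τm) by ring, Real.rpow_add ha, Real.rpow_one]
  rw [habs, e1, e2, e3]
  show (-τm) * (a * r ^ (τm - 1)) * (g (a * r ^ τm) * (a ^ (-2 + 2 / τm) * r ^ (τm * (-2 + 2 / τm)))) = _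
  ring

/-- for `N ≥ 2`, `μ > μ₀` and nondecreasing measurable
`g : [0,∞) → [0,∞)`, for every `a > 0`,
`∫_{B₁} g(a|x|^{τ₋}) |x|^{τ₊} dx < ∞ ↔ ∫₁^∞ g(t) t^{-1-p*_μ} dt < ∞`. -/
theorem stmt19 (N : ℕ) (hN : 2 ≤ N) (μ : ℝ) (hμ : mu0 N < μ)
    (g : ℝ → ℝ) (hgmeas : Measurable g) (hgm : MonotoneOn g (Ici 0))
    (hg0 : ∀ s : ℝ, 0 ≤ s → 0 ≤ g s) :
    ∀ a : ℝ, 0 < a →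
      ((∫⁻ x in Metric.ball (0 : EucN N) 1,
          ENNReal.ofReal (g (a * ‖x‖ ^ tauM N μ) * ‖x‖ ^ tauP N μ) ∂volume < ⊤) ↔
       (∫⁻ t in Ioi (1 : ℝ),
          ENNReal.ofReal (g t * t ^ (-1 - pstar N μ)) ∂volume < ⊤)) := by
  intro a ha
  set τm := tauM N μ with hτmdef
  set τp := tauP N μ with hτpdef
  have hN2 : (2:ℝ) ≤ (N:ℝ) := by exact_mod_cast hN
  have hD : 0 < ((N:ℝ) - 2) ^ 2 / 4 + μ := by
    have : mu0 N = -(((N:ℝ) - 2) ^ 2) / 4 := rfl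
    rw [this] at hμ
    linarith
  have hsqrt : 0 < Real.sqrt (((N:ℝ) - 2) ^ 2 / 4 + μ) := Real.sqrt_pos.2 hD
  have hτm : τm < 0 := by
    rw [hτmdef]
    unfold tauM
    have : 0 ≤ ((N:ℝ) - 2) / 2 := by linarith
    linarith
  have hτm' : τm ≠ 0 := hτm.ne
  have hsum : τp + τm = 2 - (N:ℝ) := by
    rw [hτpdef, hτmdef]
    unfold tauP tauM
    ring
  have hexp : -1 - pstar N μ = -2 + 2 / τm := by
    unfold pstar
    rw [← hτmdef]
    ring
  -- measurability of the radial profile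
  have hrpowm : Measurable fun r : ℝ => r ^ τm := by fun_prop
  have hG : Measurable (fun r : ℝ => ENNReal.ofReal (g (a * r ^ τm) * r ^ τp)) := by
    fun_prop
  set F : ℝ → ℝ≥0∞ :=
    (Iio (1:ℝ)).indicator (fun r => ENNReal.ofReal (g (a * r ^ τm) * r ^ τp)) with hFdef
  have hFmeas : Measurable F := hG.indicator measurableSet_Iio
  have hball : ∫⁻ x in Metric.ball (0 : EucN N) 1,
      ENNReal.ofReal (g (a * ‖x‖ ^ τm) * ‖x‖ ^ τp) ∂volume = ∫⁻ x : EucN N, F ‖x‖ := by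
    rw [← lintegral_indicator measurableSet_ball]
    refine lintegral_congr fun x => ?_
    by_cases hx : ‖x‖ < 1
    · rw [indicator_of_mem (mem_ball_zero_iff.2 hx), hFdef, indicator_of_mem (mem_Iio.2 hx)]
    · rw [indicator_of_notMem (fun h => hx (mem_ball_zero_iff.1 h)), hFdef,
        indicator_of_notMem (fun h => hx (mem_Iio.1 h))]
  have hrad := radial_lintegral N (by omega) F hFmeas
  set J := ∫⁻ r in Ioo (0:ℝ) 1,
      ENNReal.ofReal (g (a * r ^ τm) * r ^ (τp + (N:ℝ) - 1)) ∂volume with hJdef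
  have hIoi : ∫⁻ r in Ioi (0:ℝ), ENNReal.ofReal (r ^ (N - 1)) * F r = J := by
    have hptwise : ∀ r ∈ Ioi (0:ℝ), ENNReal.ofReal (r ^ (N-1)) * F r =
        (Iio (1:ℝ)).indicator
          (fun r => ENNReal.ofReal (g (a * r ^ τm) * r ^ (τp + (N:ℝ) - 1))) r := by
      intro r hr
      have hr0 : (0:ℝ) < r := hr
      by_cases h1 : r < 1
      · rw [hFdef, indicator_of_mem (mem_Iio.2 h1), indicator_of_mem (mem_Iio.2 h1),
          ← ENNReal.ofReal_mul (by positivity)]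
        congr 1
        have hpow : (r:ℝ) ^ (N - 1 : ℕ) = r ^ ((N:ℝ) - 1) := by
          rw [← Real.rpow_natCast r (N - 1)]
          congr 1
          have : ((N - 1 : ℕ) : ℝ) = (N:ℝ) - 1 := by
            have : 1 ≤ N := by omega
            push_cast [Nat.cast_sub this]
            ring
          exact this
        have hsplit : r ^ (τp + (N:ℝ) - 1) = r ^ τp * r ^ ((N:ℝ) - 1) := by
          rw [← Real.rpow_add hr0]
          ring_nf
        rw [hpow, hsplit]
        ring
      · rw [hFdef, indicator_of_notMem (fun h => h1 (mem_Iio.1 h)), indicator_of_notMem (fun h => h1 (mem_Iio.1 h)), mul_zero]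
    rw [setLIntegral_congr_fun measurableSet_Ioi hptwise,
      lintegral_indicator measurableSet_Iio,
      Measure.restrict_restrict measurableSet_Iio,
      show Iio (1:ℝ) ∩ Ioi 0 = Ioo 0 1 by rw [Set.inter_comm]; exact Set.Ioi_inter_Iio]
  -- positivity of the sphere constant
  haveI : NeZero N := ⟨by omega⟩
  set c0 := (volume : Measure (EucN N)).toSphere univ with hc0def
  have hc0 : c0 = (Module.finrank ℝ (EucN N) : ℝ≥0∞) * volume (Metric.ball (0:EucN N) 1) :=
    Measure.toSphere_apply_univ _
  have hc0ne : c0 ≠ 0 := by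
    rw [hc0]
    have h1 : (Module.finrank ℝ (EucN N) : ℝ≥0∞) ≠ 0 := by
      simp [finrank_euclideanSpace_fin]
      omega
    have h2 : volume (Metric.ball (0:EucN N) 1) ≠ 0 :=
      (measure_ball_pos volume 0 one_pos).ne'
    exact mul_ne_zero h1 h2
  have hc0t : c0 ≠ ⊤ := by
    rw [hc0]
    exact ENNReal.mul_ne_top (ENNReal.natCast_ne_top _) measure_ball_lt_top.ne
  -- substitution
  have hCpos : 0 < (-τm) * a ^ (2 / τm - 1) :=
    mul_pos (by linarith) (Real.rpow_pos_of_pos ha _)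
  have hsubst := subst_lemma N a τm τp ha hτm hsum g
  have h1 : (∫⁻ t in Ioi a, ENNReal.ofReal (g t * t ^ (-2 + 2 / τm)) ∂volume < ⊤) ↔
      J < ⊤ := by
    rw [hsubst, ← hJdef]
    exact mul_lt_top_iff_right (ENNReal.ofReal_pos.2 hCpos).ne' ENNReal.ofReal_ne_top
  have h2 := tail_iff g hgm hg0 (-2 + 2 / τm) a ha
  rw [hball, hrad, hIoi, mul_lt_top_iff_right hc0ne hc0t]
  simp only [hexp]
  exact (h1.symm.trans h2)
end
end
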